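/- Equivalence of ensembles: let rho in (0,infinity)^2, let N_L in N^2 be a sequence with N_L / L -> rho as L -> infinity, and let mubar = Mbar(rho) be the unique maximizer in D_mu of mu -> rho·mu - p(mu). Then the specific relative entropy converges to zero: (1/L) * H(pi_{L,N_L} | nu^L_{mubar}) -> 0 as L -> infinity; equivalently, -(1/L) * log nu^L_{mubar}({eta : Sigma_L(eta) = N_L}) -> 0. -/

import Mathlib

open Real Set Filter Topology

set_option maxHeartbeats 1000000

noncomputable section

/-- Euclidean norm `|k|` of a pair of naturals. -/
def knorm (k : ℕ × ℕ) : ℝ := Real.sqrt ((k.1 : ℝ) ^ 2 + (k.2 : ℝ) ^ 2)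

/-- Dot product `μ·k` of a chemical potential with an occupation vector. -/
def dotNat (μ : ℝ × ℝ) (k : ℕ × ℕ) : ℝ := μ.1 * k.1 + μ.2 * k.2

/-- Summand `w(k) exp(μ·k)` of the grand-canonical partition function. -/
def zsummand (w : ℕ × ℕ → ℝ) (μ : ℝ × ℝ) (k : ℕ × ℕ) : ℝ := w k * Real.exp (dotNat μ k)

/-- `dom z`: the set of `μ` where `z(μ) = ∑_k w(k) exp(μ·k)` is finite. -/
def domz (w : ℕ × ℕ → ℝ) : Set (ℝ × ℝ) := {μ | Summable (zsummand w μ)}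

/-- `D_μ`: the set of `μ` where `∑_k k_i w(k) exp(μ·k)` is finite for `i = 1,2`. -/
def Dmu (w : ℕ × ℕ → ℝ) : Set (ℝ × ℝ) :=
  {μ | Summable (fun k : ℕ × ℕ => (k.1 : ℝ) * zsummand w μ k) ∧
       Summable (fun k : ℕ × ℕ => (k.2 : ℝ) * zsummand w μ k)}

/-- `w` is exponentially bounded: `w(k) ≤ ξ^|k|` for some `ξ > 0`. -/
def ExpBounded (w : ℕ × ℕ → ℝ) : Prop := ∃ ξ : ℝ, 0 < ξ ∧ ∀ k : ℕ × ℕ, w k ≤ ξ ^ knorm k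

/-- The grand-canonical partition function `z(μ)`. -/
def zfun (w : ℕ × ℕ → ℝ) (μ : ℝ × ℝ) : ℝ := ∑' k : ℕ × ℕ, zsummand w μ k

/-- The pressure `p(μ) = log z(μ)`. -/
def press (w : ℕ × ℕ → ℝ) (μ : ℝ × ℝ) : ℝ := Real.log (zfun w μ)

/-- The single-site grand-canonical mass function `ν¹_μ(k) = w(k) exp(μ·k)/z(μ)`. -/
def nu1 (w : ℕ × ℕ → ℝ) (μ : ℝ × ℝ) (k : ℕ × ℕ) : ℝ := zsummand w μ k / zfun w μ

/-- Density of the first species `R₁(μ)`. -/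
def R1 (w : ℕ × ℕ → ℝ) (μ : ℝ × ℝ) : ℝ := ∑' k : ℕ × ℕ, (k.1 : ℝ) * nu1 w μ k

/-- Density of the second species `R₂(μ)`. -/
def R2 (w : ℕ × ℕ → ℝ) (μ : ℝ × ℝ) : ℝ := ∑' k : ℕ × ℕ, (k.2 : ℝ) * nu1 w μ k

/-- The density map `R(μ) = (R₁(μ), R₂(μ))`. -/
def Rmap (w : ℕ × ℕ → ℝ) (μ : ℝ × ℝ) : ℝ × ℝ := (R1 w μ, R2 w μ)

/-- Dot product of two real vectors. -/
def dotR (a b : ℝ × ℝ) : ℝ := a.1 * b.1 + a.2 * b.2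

/-- Total particle numbers `Σ_L(η)` on the lattice `{1,…,L}`. -/
def SigmaL (L : ℕ) (η : Fin L → ℕ × ℕ) : ℕ × ℕ := ∑ x, η x

/-- The stationary product weight `w^L(η) = ∏_x w(η(x))`. -/
def wprod (w : ℕ × ℕ → ℝ) (L : ℕ) (η : Fin L → ℕ × ℕ) : ℝ := ∏ x, w (η x)

/-- The canonical partition function `Z_{L,N}`. -/
def ZLN (w : ℕ × ℕ → ℝ) (L : ℕ) (N : ℕ × ℕ) : ℝ :=
  ∑' η : {η : Fin L → ℕ × ℕ // SigmaL L η = N}, wprod w L η.1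

/-- The canonical measure `π_{L,N}`. -/
def piLN (w : ℕ × ℕ → ℝ) (L : ℕ) (N : ℕ × ℕ) (η : Fin L → ℕ × ℕ) : ℝ :=
  if SigmaL L η = N then wprod w L η / ZLN w L N else 0

/-- The grand-canonical product measure `ν^L_μ`. -/
def nuL (w : ℕ × ℕ → ℝ) (μ : ℝ × ℝ) (L : ℕ) (η : Fin L → ℕ × ℕ) : ℝ :=
  (∏ x, (w (η x) * Real.exp (dotNat μ (η x)))) / (zfun w μ) ^ L

/-- Relative entropy `H(π_{L,N} | ν^L_μ)`. -/
def relEnt (w : ℕ × ℕ → ℝ) (μ : ℝ × ℝ) (L : ℕ) (N : ℕ × ℕ) : ℝ :=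
  ∑' η : Fin L → ℕ × ℕ, piLN w L N η * Real.log (piLN w L N η / nuL w μ L η)

/-- The grand-canonical probability `ν^L_μ({Σ_L = N})`. -/
def nuProb (w : ℕ × ℕ → ℝ) (μ : ℝ × ℝ) (L : ℕ) (N : ℕ × ℕ) : ℝ :=
  ∑' η : {η : Fin L → ℕ × ℕ // SigmaL L η = N}, nuL w μ L η.1

/-- The restriction of a weight on `[0,∞)²` to `ℕ²`. -/
def wN (w : ℝ × ℝ → ℝ) (k : ℕ × ℕ) : ℝ := w ((k.1 : ℝ), (k.2 : ℝ))

/-- Regularity of the exponential tail of `w`: for every direction `φ ∈ [0,π/2]` the radial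
exponential growth rate exists and is continuous in `φ`. -/
def RegularTail (w : ℝ × ℝ → ℝ) : Prop :=
  ∃ ℓ : ℝ → ℝ, ContinuousOn ℓ (Icc 0 (π / 2)) ∧
    ∀ φ ∈ Icc (0 : ℝ) (π / 2),
      Tendsto (fun r : ℝ => Real.log (w (r * Real.cos φ, r * Real.sin φ)) / r) atTop (𝓝 (ℓ φ))


/-! ### Auxiliary lemmas -/

section Aux

lemma log_factorial_ge (n : ℕ) : (n:ℝ) * Real.log n - n ≤ Real.log (n.factorial : ℝ) := by
  induction n with
  | zero => simp
  | succ n ih =>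
    have hfac : ((n+1).factorial : ℝ) = ((n:ℝ)+1) * (n.factorial : ℝ) := by
      push_cast [Nat.factorial_succ]; ring
    have hpos : (0:ℝ) < (n.factorial : ℝ) := by positivity
    have hlog : Real.log ((n+1).factorial : ℝ)
        = Real.log ((n:ℝ)+1) + Real.log (n.factorial : ℝ) := by
      rw [hfac, Real.log_mul (by positivity) (ne_of_gt hpos)]
    rcases Nat.eq_zero_or_pos n with h0 | hn
    · subst h0; simp
    · have hn' : (0:ℝ) < (n:ℝ) := by exact_mod_cast hn
      have key : (n:ℝ) * Real.log ((n:ℝ)+1) - (n:ℝ) * Real.log (n:ℝ) ≤ 1 := by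
        have h1 : Real.log (((n:ℝ)+1)/(n:ℝ)) ≤ ((n:ℝ)+1)/(n:ℝ) - 1 :=
          Real.log_le_sub_one_of_pos (by positivity)
        have h2 : Real.log (((n:ℝ)+1)/(n:ℝ)) = Real.log ((n:ℝ)+1) - Real.log (n:ℝ) :=
          Real.log_div (by positivity) (ne_of_gt hn')
        have h3 : ((n:ℝ)+1)/(n:ℝ) - 1 = 1/(n:ℝ) := by field_simp; ring
        have := h1; rw [h2, h3] at this
        calc (n:ℝ) * Real.log ((n:ℝ)+1) - (n:ℝ) * Real.log (n:ℝ)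
            = (n:ℝ) * (Real.log ((n:ℝ)+1) - Real.log (n:ℝ)) := by ring
          _ ≤ (n:ℝ) * (1/(n:ℝ)) := by
              apply mul_le_mul_of_nonneg_left this (le_of_lt hn')
          _ = 1 := by field_simp
      push_cast [hlog]
      push_cast at ih
      nlinarith [key, ih]

lemma log_factorial_le (n : ℕ) :
    Real.log (n.factorial : ℝ) ≤ ((n:ℝ)+1) * Real.log ((n:ℝ)+1) - n := by
  induction n with
  | zero => simp
  | succ n ih =>
    have hpos : (0:ℝ) < (n.factorial : ℝ) := by positivity
    have hlog : Real.log ((n+1).factorial : ℝ)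
        = Real.log ((n:ℝ)+1) + Real.log (n.factorial : ℝ) := by
      rw [show ((n+1).factorial : ℝ) = ((n:ℝ)+1) * (n.factorial : ℝ) by
        push_cast [Nat.factorial_succ]; ring,
        Real.log_mul (by positivity) (ne_of_gt hpos)]
    have key : 1 ≤ ((n:ℝ)+2) * (Real.log ((n:ℝ)+2) - Real.log ((n:ℝ)+1)) := by
      have h1 : Real.log (((n:ℝ)+1)/((n:ℝ)+2)) ≤ ((n:ℝ)+1)/((n:ℝ)+2) - 1 :=
        Real.log_le_sub_one_of_pos (by positivity)
      have h2 : Real.log (((n:ℝ)+1)/((n:ℝ)+2)) = Real.log ((n:ℝ)+1) - Real.log ((n:ℝ)+2) :=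
        Real.log_div (by positivity) (by positivity)
      have h3 : ((n:ℝ)+1)/((n:ℝ)+2) - 1 = -(1/((n:ℝ)+2)) := by field_simp; ring
      rw [h2, h3] at h1
      have h4 : 1/((n:ℝ)+2) ≤ Real.log ((n:ℝ)+2) - Real.log ((n:ℝ)+1) := by linarith
      calc (1:ℝ) = ((n:ℝ)+2) * (1/((n:ℝ)+2)) := by field_simp
        _ ≤ ((n:ℝ)+2) * (Real.log ((n:ℝ)+2) - Real.log ((n:ℝ)+1)) := by
            apply mul_le_mul_of_nonneg_left h4 (by positivity)
    push_cast [hlog]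
    push_cast at ih
    ring_nf at key ih ⊢; linarith

lemma zsummand_pos {a : ℕ × ℕ → ℝ} (ha : ∀ k, 0 < a k) (μ : ℝ × ℝ) (k : ℕ × ℕ) :
    0 < zsummand a μ k := mul_pos (ha k) (Real.exp_pos _)

lemma summable_zsummand {a : ℕ × ℕ → ℝ} (ha : ∀ k, 0 < a k) {μ : ℝ × ℝ}
    (h1 : Summable (fun k : ℕ × ℕ => (k.1 : ℝ) * zsummand a μ k))
    (h2 : Summable (fun k : ℕ × ℕ => (k.2 : ℝ) * zsummand a μ k)) :
    Summable (zsummand a μ) := by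
  have hg : Summable (fun k : ℕ × ℕ =>
      (k.1 : ℝ) * zsummand a μ k + (k.2 : ℝ) * zsummand a μ k
        + (if k = (0,0) then zsummand a μ (0,0) else 0)) := by
    exact (h1.add h2).add (summable_of_ne_finset_zero (s := {(0,0)})
      (fun k hk => by simp at hk; simp [hk]))
  apply Summable.of_nonneg_of_le (fun k => (zsummand_pos ha μ k).le) _ hg
  intro k
  rcases eq_or_ne k (0,0) with hk | hk
  · subst hk; simp
  · have hk1 : 1 ≤ k.1 + k.2 := by
      rcases Nat.eq_zero_or_pos (k.1 + k.2) with h | h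
      · exfalso; apply hk
        have := Nat.eq_zero_of_add_eq_zero_right h
        have := Nat.eq_zero_of_add_eq_zero_left h
        ext <;> simp_all
      · exact h
    have hz := zsummand_pos ha μ k
    have : (1:ℝ) ≤ (k.1 : ℝ) + (k.2 : ℝ) := by exact_mod_cast hk1
    simp only [hk, if_neg, ite_false]
    nlinarith

lemma zfun_pos {a : ℕ × ℕ → ℝ} (ha : ∀ k, 0 < a k) {μ : ℝ × ℝ}
    (hs : Summable (zsummand a μ)) : 0 < zfun a μ :=
  Summable.tsum_pos hs (fun k => (zsummand_pos ha μ k).le) (0,0) (zsummand_pos ha μ (0,0))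

/-- The event `{Σ_L = N}` is finite. -/
lemma eventSet_finite (L : ℕ) (N : ℕ × ℕ) : {η : Fin L → ℕ × ℕ | SigmaL L η = N}.Finite := by
  apply Set.Finite.subset (Set.Finite.pi (t := fun _ : Fin L => Set.Iic N)
    (fun _ => Set.finite_Iic N))
  intro η hη x _
  have h1 : (η x).1 ≤ N.1 := by
    have : (η x).1 ≤ (SigmaL L η).1 := by
      rw [SigmaL, Prod.fst_sum]
      exact Finset.single_le_sum (f := fun y => (η y).1) (fun i _ => Nat.zero_le _)
        (Finset.mem_univ x)
    rwa [hη] at this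
  have h2 : (η x).2 ≤ N.2 := by
    have : (η x).2 ≤ (SigmaL L η).2 := by
      rw [SigmaL, Prod.snd_sum]
      exact Finset.single_le_sum (f := fun y => (η y).2) (fun i _ => Nat.zero_le _)
        (Finset.mem_univ x)
    rwa [hη] at this
  exact ⟨h1, h2⟩

/-- Finset version of the event. -/
def eventFinset (L : ℕ) (N : ℕ × ℕ) : Finset (Fin L → ℕ × ℕ) :=
  (eventSet_finite L N).toFinset

lemma mem_eventFinset {L : ℕ} {N : ℕ × ℕ} {η : Fin L → ℕ × ℕ} :
    η ∈ eventFinset L N ↔ SigmaL L η = N := by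
  simp [eventFinset, Set.Finite.mem_toFinset]

lemma tsum_event_eq_sum {L : ℕ} {N : ℕ × ℕ} (f : (Fin L → ℕ × ℕ) → ℝ) :
    (∑' η : {η : Fin L → ℕ × ℕ // SigmaL L η = N}, f η.1) = ∑ η ∈ eventFinset L N, f η := by
  refine Eq.trans (tsum_subtype {η : Fin L → ℕ × ℕ | SigmaL L η = N} f) ?_
  refine Eq.trans (tsum_eq_sum (s := eventFinset L N) ?_) ?_
  · intro η hη
    exact Set.indicator_of_notMem (by simpa [mem_eventFinset] using hη) f
  · refine Finset.sum_congr rfl (fun η hη => ?_)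
    exact Set.indicator_of_mem (by simpa [mem_eventFinset] using hη) f

end Aux


section Ident

variable {a : ℕ × ℕ → ℝ} {μ : ℝ × ℝ} {L : ℕ} {N : ℕ × ℕ}

lemma dotNat_sigma (μ : ℝ × ℝ) (L : ℕ) (η : Fin L → ℕ × ℕ) :
    dotNat μ (SigmaL L η) = ∑ x, dotNat μ (η x) := by
  simp only [dotNat, SigmaL, Prod.fst_sum, Prod.snd_sum, Nat.cast_sum, Finset.mul_sum]
  rw [← Finset.sum_add_distrib]

lemma wprod_pos (ha : ∀ k, 0 < a k) (L : ℕ) (η : Fin L → ℕ × ℕ) : 0 < wprod a L η :=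
  Finset.prod_pos (fun x _ => ha (η x))

lemma prod_zsummand (L : ℕ) (η : Fin L → ℕ × ℕ) :
    ∏ x, (a (η x) * Real.exp (dotNat μ (η x)))
      = wprod a L η * Real.exp (dotNat μ (SigmaL L η)) := by
  rw [Finset.prod_mul_distrib, ← Real.exp_sum, dotNat_sigma, wprod]

lemma ZLN_eq_sum (a : ℕ × ℕ → ℝ) (L : ℕ) (N : ℕ × ℕ) :
    ZLN a L N = ∑ η ∈ eventFinset L N, wprod a L η := tsum_event_eq_sum _

lemma exists_event (hL : 0 < L) (N : ℕ × ℕ) :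
    (fun x : Fin L => if x = (⟨0, hL⟩ : Fin L) then N else 0) ∈ eventFinset L N := by
  rw [mem_eventFinset, SigmaL, Finset.sum_ite_eq' Finset.univ (⟨0, hL⟩ : Fin L)
    (fun _ => N)]
  simp

lemma ZLN_pos (ha : ∀ k, 0 < a k) (hL : 0 < L) (N : ℕ × ℕ) : 0 < ZLN a L N := by
  rw [ZLN_eq_sum]
  exact Finset.sum_pos (fun η _ => wprod_pos ha L η) ⟨_, exists_event hL N⟩

lemma nuProb_eq (L : ℕ) (N : ℕ × ℕ) :
    nuProb a μ L N = ZLN a L N * Real.exp (dotNat μ N) / (zfun a μ)^L := by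
  rw [nuProb, tsum_event_eq_sum, ZLN_eq_sum, Finset.sum_mul, Finset.sum_div]
  refine Finset.sum_congr rfl (fun η hη => ?_)
  rw [nuL, prod_zsummand, (mem_eventFinset.1 hη)]

lemma relEnt_eq (ha : ∀ k, 0 < a k) (hsum : Summable (zsummand a μ)) (hL : 0 < L)
    (N : ℕ × ℕ) :
    relEnt a μ L N = L * press a μ - dotNat μ N - Real.log (ZLN a L N) := by
  have hZ : 0 < ZLN a L N := ZLN_pos ha hL N
  have hz : 0 < zfun a μ := zfun_pos ha hsum
  have hterm : ∀ η ∈ eventFinset L N,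
      piLN a L N η * Real.log (piLN a L N η / nuL a μ L η)
        = wprod a L η / ZLN a L N
            * (L * press a μ - dotNat μ N - Real.log (ZLN a L N)) := by
    intro η hη
    have hmem := mem_eventFinset.1 hη
    have hw : 0 < wprod a L η := wprod_pos ha L η
    have hpi : piLN a L N η = wprod a L η / ZLN a L N := by rw [piLN, if_pos hmem]
    have hnu : nuL a μ L η = wprod a L η * Real.exp (dotNat μ N) / (zfun a μ)^L := by
      rw [nuL, prod_zsummand, hmem]
    have hratio : piLN a L N η / nuL a μ L η
        = (zfun a μ)^L / (ZLN a L N * Real.exp (dotNat μ N)) := by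
      rw [hpi, hnu]
      field_simp
    rw [hratio, Real.log_div (by positivity) (by positivity), Real.log_pow,
      Real.log_mul (by positivity) (by positivity), Real.log_exp, press, hpi]
    ring
  rw [relEnt, tsum_eq_sum (s := eventFinset L N) ?_]
  · rw [Finset.sum_congr rfl hterm, ← Finset.sum_mul, ← Finset.sum_div, ← ZLN_eq_sum,
      div_self (ne_of_gt hZ), one_mul]
  · intro η hη
    rw [piLN, if_neg (by simpa [mem_eventFinset] using hη), zero_mul]

lemma mem_event_le {η : Fin L → ℕ × ℕ} (hη : η ∈ eventFinset L N) (x : Fin L) :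
    η x ≤ N := by
  have hmem := mem_eventFinset.1 hη
  constructor
  · have : (η x).1 ≤ (SigmaL L η).1 := by
      rw [SigmaL, Prod.fst_sum]
      exact Finset.single_le_sum (f := fun y => (η y).1) (fun i _ => Nat.zero_le _)
        (Finset.mem_univ x)
    rwa [hmem] at this
  · have : (η x).2 ≤ (SigmaL L η).2 := by
      rw [SigmaL, Prod.snd_sum]
      exact Finset.single_le_sum (f := fun y => (η y).2) (fun i _ => Nat.zero_le _)
        (Finset.mem_univ x)
    rwa [hmem] at this

lemma ZLN_mul_exp_le (ha : ∀ k, 0 < a k) (hsum : Summable (zsummand a μ)) (L : ℕ)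
    (N : ℕ × ℕ) :
    ZLN a L N * Real.exp (dotNat μ N) ≤ (zfun a μ)^L := by
  have h1 : ZLN a L N * Real.exp (dotNat μ N)
      = ∑ η ∈ eventFinset L N, ∏ x, zsummand a μ (η x) := by
    rw [ZLN_eq_sum, Finset.sum_mul]
    refine Finset.sum_congr rfl (fun η hη => ?_)
    simp only [zsummand]
    rw [prod_zsummand, mem_eventFinset.1 hη]
  have hsub : eventFinset L N ⊆ Fintype.piFinset (fun _ : Fin L => Finset.Iic N) := by
    intro η hη
    rw [Fintype.mem_piFinset]
    exact fun x => Finset.mem_Iic.2 (mem_event_le hη x)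
  have h2 : ∑ η ∈ eventFinset L N, ∏ x, zsummand a μ (η x)
      ≤ ∑ η ∈ Fintype.piFinset (fun _ : Fin L => Finset.Iic N), ∏ x, zsummand a μ (η x) :=
    Finset.sum_le_sum_of_subset_of_nonneg hsub
      (fun η _ _ => Finset.prod_nonneg (fun x _ => (zsummand_pos ha μ (η x)).le))
  have h3 : ∑ η ∈ Fintype.piFinset (fun _ : Fin L => Finset.Iic N), ∏ x, zsummand a μ (η x)
      = ∏ _x : Fin L, ∑ k ∈ Finset.Iic N, zsummand a μ k :=
    (Finset.prod_univ_sum (fun _ => Finset.Iic N) (fun _ k => zsummand a μ k)).symm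
  have h4 : ∑ k ∈ Finset.Iic N, zsummand a μ k ≤ zfun a μ :=
    Summable.sum_le_tsum _ (fun k _ => (zsummand_pos ha μ k).le) hsum
  calc ZLN a L N * Real.exp (dotNat μ N)
      ≤ ∏ _x : Fin L, ∑ k ∈ Finset.Iic N, zsummand a μ k := by rw [h1]; rw [← h3] at *; exact h2
    _ ≤ ∏ _x : Fin L, zfun a μ := Finset.prod_le_prod
        (fun x _ => Finset.sum_nonneg (fun k _ => (zsummand_pos ha μ k).le))
        (fun x _ => h4)
    _ = (zfun a μ)^L := by rw [Finset.prod_const, Finset.card_univ, Fintype.card_fin]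

end Ident


section Count

/-- Transport equiv for sigma fibers. -/
def sigmaFib {m : ℕ} (β : Fin m → Type*) (j : Fin m) : {p : Σ i, β i // p.1 = j} ≃ β j where
  toFun p := p.2 ▸ p.1.2
  invFun y := ⟨⟨j, y⟩, rfl⟩
  left_inv := by rintro ⟨⟨i, y⟩, rfl⟩; rfl
  right_inv := by intro y; rfl

lemma exists_tau0 {L m : ℕ} (c : Fin m → ℕ) (hc : ∑ j, c j = L) :
    ∃ τ0 : Fin L → Fin m,
      ∀ j, (Finset.univ.filter (fun x => τ0 x = j)).card = c j := by
  have hcard : Fintype.card (Σ j : Fin m, Fin (c j)) = Fintype.card (Fin L) := by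
    simp [hc]
  let e : (Σ j : Fin m, Fin (c j)) ≃ Fin L := Fintype.equivOfCardEq hcard
  refine ⟨fun x => (e.symm x).1, fun j => ?_⟩
  have h1 : (Finset.univ.filter (fun x : Fin L => (e.symm x).1 = j)).card
      = Fintype.card {x : Fin L // (e.symm x).1 = j} := (Fintype.card_subtype _).symm
  have h2 : Fintype.card {x : Fin L // (e.symm x).1 = j}
      = Fintype.card {p : Σ i : Fin m, Fin (c i) // p.1 = j} := by
    exact Fintype.card_congr
      (Equiv.subtypeEquiv (q := fun p : Σ i : Fin m, Fin (c i) => p.1 = j) e.symm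
        (fun x => Iff.rfl))
  rw [h1, h2, Fintype.card_congr (sigmaFib (fun i => Fin (c i)) j), Fintype.card_fin]

lemma card_types_mul_factorials {L m : ℕ} (c : Fin m → ℕ) (hc : ∑ j, c j = L) :
    (L.factorial : ℕ) ≤ (Finset.univ.filter
        (fun τ : Fin L → Fin m =>
          ∀ j, (Finset.univ.filter (fun x => τ x = j)).card = c j)).card
      * ∏ j, (c j).factorial := by
  classical
  obtain ⟨τ0, hτ0⟩ := exists_tau0 c hc
  set T : Finset (Fin L → Fin m) := Finset.univ.filter
    (fun τ : Fin L → Fin m =>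
      ∀ j, (Finset.univ.filter (fun x => τ x = j)).card = c j) with hT
  have hmaps : ∀ σ : Equiv.Perm (Fin L), τ0 ∘ σ ∈ T := by
    intro σ
    rw [hT, Finset.mem_filter]
    refine ⟨Finset.mem_univ _, fun j => ?_⟩
    rw [← hτ0 j]
    apply Finset.card_bij' (fun x _ => σ x) (fun y _ => σ.symm y)
    · intro x hx
      simp only [Finset.mem_filter, Finset.mem_univ, true_and] at hx ⊢
      exact hx
    · intro y hy
      simp only [Finset.mem_filter, Finset.mem_univ, true_and, Function.comp] at hy ⊢
      simpa using hy
    · intro x _; simp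
    · intro y _; simp
  have hsplit : Finset.univ.card
      = ∑ τ ∈ T, (Finset.univ.filter (fun σ : Equiv.Perm (Fin L) => τ0 ∘ σ = τ)).card :=
    Finset.card_eq_sum_card_fiberwise (fun σ _ => hmaps σ)
  have hfiber : ∀ τ ∈ T,
      (Finset.univ.filter (fun σ : Equiv.Perm (Fin L) => τ0 ∘ σ = τ)).card
        ≤ ∏ j, (c j).factorial := by
    intro τ _
    set F := Finset.univ.filter (fun σ : Equiv.Perm (Fin L) => τ0 ∘ σ = τ) with hF
    rcases Finset.eq_empty_or_nonempty F with he | ⟨σ0, hσ0⟩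
    · rw [he]; simp
    · have hσ0' : τ0 ∘ σ0 = τ := (Finset.mem_filter.1 hσ0).2
      have key : ∀ σ ∈ F, ∀ x, τ0 ((σ * σ0⁻¹) x) = τ0 x := by
        intro σ hσ x
        have hσ' : τ0 ∘ σ = τ := (Finset.mem_filter.1 hσ).2
        have : τ0 (σ (σ0⁻¹ x)) = τ (σ0⁻¹ x) := congrFun hσ' (σ0⁻¹ x)
        rw [Equiv.Perm.mul_apply, this, ← hσ0']
        simp
      -- injection into products of permutations of the fibers of τ0
      have hinj : Function.Injective
          (fun (σ : {σ // σ ∈ F}) (j : Fin m) =>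
            Equiv.Perm.subtypePerm ((σ : Equiv.Perm (Fin L)) * σ0⁻¹)
              (fun x => by
                constructor
                · intro hx; rw [← key σ σ.2 x]; exact hx
                · intro hx; rw [key σ σ.2 x]; exact hx) :
            {σ // σ ∈ F} → ∀ j : Fin m, Equiv.Perm {x : Fin L // τ0 x = j}) := by
        intro σ σ' hψ
        have : ∀ x : Fin L, ((σ : Equiv.Perm (Fin L)) * σ0⁻¹) x
            = ((σ' : Equiv.Perm (Fin L)) * σ0⁻¹) x := by
          intro x
          have h := congrFun hψ (τ0 x)
          have h2 := congrFun (congrArg Equiv.toFun h) ⟨x, rfl⟩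
          simpa [Equiv.Perm.subtypePerm_apply, Subtype.ext_iff] using h2
        have heq : (σ : Equiv.Perm (Fin L)) * σ0⁻¹ = (σ' : Equiv.Perm (Fin L)) * σ0⁻¹ :=
          Equiv.ext this
        have := mul_right_cancel heq
        exact Subtype.ext this
      have hcard1 : F.card = Fintype.card {σ // σ ∈ F} := (Fintype.card_coe F).symm
      have hcard2 : Fintype.card {σ // σ ∈ F}
          ≤ Fintype.card (∀ j : Fin m, Equiv.Perm {x : Fin L // τ0 x = j}) :=
        Fintype.card_le_of_injective _ hinj
      have hcard3 : Fintype.card (∀ j : Fin m, Equiv.Perm {x : Fin L // τ0 x = j})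
          = ∏ j, (c j).factorial := by
        rw [Fintype.card_pi]
        refine Finset.prod_congr rfl (fun j _ => ?_)
        rw [Fintype.card_perm]
        congr 1
        rw [Fintype.card_subtype, hτ0 j]
      rw [hcard1, ← hcard3]
      exact hcard2
  have hL : (Finset.univ : Finset (Equiv.Perm (Fin L))).card = L.factorial := by
    rw [Finset.card_univ, Fintype.card_perm, Fintype.card_fin]
  calc (L.factorial : ℕ) = (Finset.univ : Finset (Equiv.Perm (Fin L))).card := hL.symm
    _ = ∑ τ ∈ T, (Finset.univ.filter (fun σ : Equiv.Perm (Fin L) => τ0 ∘ σ = τ)).card :=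
        hsplit
    _ ≤ ∑ _τ ∈ T, ∏ j, (c j).factorial := Finset.sum_le_sum hfiber
    _ = T.card * ∏ j, (c j).factorial := by rw [Finset.sum_const, smul_eq_mul]

lemma ZLN_ge_type {a : ℕ × ℕ → ℝ} (ha : ∀ k, 0 < a k) {L m : ℕ} {N : ℕ × ℕ}
    (kv : Fin m → ℕ × ℕ) (hinj : Function.Injective kv)
    (c : Fin m → ℕ) (hc : ∑ j, c j = L) (hN : ∑ j, c j • kv j = N) :
    ((Finset.univ.filter
        (fun τ : Fin L → Fin m =>
          ∀ j, (Finset.univ.filter (fun x => τ x = j)).card = c j)).card : ℝ)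
      * ∏ j, (a (kv j)) ^ (c j) ≤ ZLN a L N := by
  classical
  set T : Finset (Fin L → Fin m) := Finset.univ.filter
    (fun τ : Fin L → Fin m =>
      ∀ j, (Finset.univ.filter (fun x => τ x = j)).card = c j) with hT
  have hmem : ∀ τ ∈ T, (kv ∘ τ) ∈ eventFinset L N := by
    intro τ hτ
    have hτ' := (Finset.mem_filter.1 hτ).2
    rw [mem_eventFinset, SigmaL]
    rw [← hN]
    rw [← Finset.sum_fiberwise_of_maps_to (g := τ) (fun x _ => Finset.mem_univ (τ x))]
    refine Finset.sum_congr rfl (fun j _ => ?_)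
    rw [Finset.sum_congr rfl (fun x hx => by
      rw [Function.comp_apply, (Finset.mem_filter.1 hx).2]),
      Finset.sum_const, hτ' j]
  have hval : ∀ τ ∈ T, wprod a L (kv ∘ τ) = ∏ j, (a (kv j)) ^ (c j) := by
    intro τ hτ
    have hτ' := (Finset.mem_filter.1 hτ).2
    rw [wprod]
    rw [← Finset.prod_fiberwise_of_maps_to (g := τ) (fun x _ => Finset.mem_univ (τ x))]
    refine Finset.prod_congr rfl (fun j _ => ?_)
    rw [Finset.prod_congr rfl (fun x hx => by
      rw [Function.comp_apply, (Finset.mem_filter.1 hx).2]),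
      Finset.prod_const, hτ' j]
  have hcompinj : ∀ τ1 ∈ T, ∀ τ2 ∈ T, kv ∘ τ1 = kv ∘ τ2 → τ1 = τ2 := by
    intro τ1 _ τ2 _ h
    funext x
    exact hinj (congrFun h x)
  have h1 : (T.card : ℝ) * ∏ j, (a (kv j)) ^ (c j)
      = ∑ η ∈ T.image (fun τ => kv ∘ τ), wprod a L η := by
    rw [Finset.sum_image (fun τ1 h1 τ2 h2 h => hcompinj τ1 h1 τ2 h2 h)]
    rw [Finset.sum_congr rfl hval, Finset.sum_const, nsmul_eq_mul]
  rw [h1, ZLN_eq_sum]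
  apply Finset.sum_le_sum_of_subset_of_nonneg
  · intro η hη
    obtain ⟨τ, hτ, rfl⟩ := Finset.mem_image.1 hη
    exact hmem τ hτ
  · intro η _ _
    exact (wprod_pos ha L η).le

end Count


section KeyLB

lemma log_ZLN_ge {a : ℕ × ℕ → ℝ} (ha : ∀ k, 0 < a k) {L m : ℕ} {N : ℕ × ℕ}
    (kv : Fin m → ℕ × ℕ) (hinj : Function.Injective kv)
    (c : Fin m → ℕ) (hc : ∑ j, c j = L) (hN : ∑ j, c j • kv j = N) :
    (L:ℝ) * Real.log L - (∑ j, (c j : ℝ) * Real.log (c j))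
      + (∑ j, (c j : ℝ) * Real.log (a (kv j))) - m * (1 + Real.log (L+1))
      ≤ Real.log (ZLN a L N) := by
  classical
  set T : Finset (Fin L → Fin m) := Finset.univ.filter
    (fun τ : Fin L → Fin m =>
      ∀ j, (Finset.univ.filter (fun x => τ x = j)).card = c j) with hT
  have hcount : (L.factorial : ℕ) ≤ T.card * ∏ j, (c j).factorial :=
    card_types_mul_factorials c hc
  have hTpos : 0 < T.card := by
    by_contra h
    push_neg at h
    interval_cases hcT : T.card
    · simp [hcT] at hcount
      exact absurd hcount (Nat.factorial_pos L).ne'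
  have hZ : (T.card : ℝ) * ∏ j, (a (kv j)) ^ (c j) ≤ ZLN a L N :=
    ZLN_ge_type ha kv hinj c hc hN
  have hprodpos : (0:ℝ) < ∏ j, (a (kv j)) ^ (c j) :=
    Finset.prod_pos (fun j _ => pow_pos (ha _) _)
  have hZpos : (0:ℝ) < (T.card : ℝ) * ∏ j, (a (kv j)) ^ (c j) :=
    mul_pos (by exact_mod_cast hTpos) hprodpos
  have hlog1 : Real.log ((T.card : ℝ) * ∏ j, (a (kv j)) ^ (c j)) ≤ Real.log (ZLN a L N) :=
    Real.log_le_log hZpos hZ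
  have hlog2 : Real.log ((T.card : ℝ) * ∏ j, (a (kv j)) ^ (c j))
      = Real.log (T.card : ℝ) + ∑ j, (c j : ℝ) * Real.log (a (kv j)) := by
    rw [Real.log_mul (by positivity) (ne_of_gt hprodpos),
      Real.log_prod (fun j _ => (pow_pos (ha _) _).ne')]
    congr 1
    exact Finset.sum_congr rfl (fun j _ => by rw [Real.log_pow])
  -- lower bound for log T.card
  have hfac : Real.log (L.factorial : ℝ)
      ≤ Real.log (T.card : ℝ) + ∑ j, Real.log ((c j).factorial : ℝ) := by
    have : (L.factorial : ℝ) ≤ (T.card : ℝ) * ∏ j, ((c j).factorial : ℝ) := by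
      exact_mod_cast hcount
    calc Real.log (L.factorial : ℝ)
        ≤ Real.log ((T.card : ℝ) * ∏ j, ((c j).factorial : ℝ)) :=
          Real.log_le_log (by positivity) this
      _ = Real.log (T.card : ℝ) + ∑ j, Real.log ((c j).factorial : ℝ) := by
          rw [Real.log_mul (by positivity) (Finset.prod_ne_zero_iff.2
              (fun j _ => (Nat.cast_pos.2 (Nat.factorial_pos _)).ne')),
            Real.log_prod (fun j _ => (Nat.cast_pos.2 (Nat.factorial_pos _)).ne')]
  have hcj : ∀ j, Real.log ((c j).factorial : ℝ)
      ≤ (c j : ℝ) * Real.log (c j) + (1 + Real.log (L+1)) - c j := by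
    intro j
    have h1 := log_factorial_le (c j)
    have hcL : (c j : ℝ) ≤ (L : ℝ) := by
      exact_mod_cast hc ▸ Finset.single_le_sum (f := fun j => c j)
        (fun i _ => Nat.zero_le _) (Finset.mem_univ j)
    have h2 : ((c j : ℝ)+1) * Real.log ((c j : ℝ)+1)
        ≤ (c j : ℝ) * Real.log (c j) + 1 + Real.log ((L:ℝ)+1) := by
      rcases Nat.eq_zero_or_pos (c j) with h0 | hpos
      · rw [h0]
        have hLog : (0:ℝ) ≤ Real.log ((L:ℝ)+1) :=
          Real.log_nonneg (by linarith [show (0:ℝ) ≤ (L:ℝ) from Nat.cast_nonneg L])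
        norm_num
        linarith
      · have hc' : (0:ℝ) < (c j : ℝ) := by exact_mod_cast hpos
        have hlog : Real.log ((c j : ℝ)+1) - Real.log (c j : ℝ) ≤ 1/(c j : ℝ) := by
          have := Real.log_le_sub_one_of_pos
            (show (0:ℝ) < ((c j : ℝ)+1)/(c j : ℝ) by positivity)
          rw [Real.log_div (by positivity) (ne_of_gt hc')] at this
          have heq : ((c j : ℝ)+1)/(c j : ℝ) - 1 = 1/(c j : ℝ) := by field_simp; ring
          linarith [heq ▸ this]
        have hmono : Real.log ((c j : ℝ)+1) ≤ Real.log ((L:ℝ)+1) :=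
          Real.log_le_log (by positivity) (by linarith)
        have hmul : (c j : ℝ) * (Real.log ((c j : ℝ)+1) - Real.log (c j : ℝ)) ≤ 1 := by
          calc (c j : ℝ) * (Real.log ((c j : ℝ)+1) - Real.log (c j : ℝ))
              ≤ (c j : ℝ) * (1/(c j : ℝ)) := mul_le_mul_of_nonneg_left hlog hc'.le
            _ = 1 := by field_simp
        nlinarith
      
    linarith
  have hfacL := log_factorial_ge L
  have hsum2 : ∑ j, ((c j : ℝ) * Real.log (c j) + (1 + Real.log (L+1)) - c j)
      = (∑ j, (c j : ℝ) * Real.log (c j)) + m * (1 + Real.log (L+1)) - L := by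
    rw [Finset.sum_sub_distrib, Finset.sum_add_distrib, Finset.sum_const,
      Finset.card_univ, Fintype.card_fin, nsmul_eq_mul]
    have : ∑ j, (c j : ℝ) = (L : ℝ) := by
      rw [← Nat.cast_sum, hc]
    rw [this]
  have hsum3 : ∑ j, Real.log ((c j).factorial : ℝ)
      ≤ (∑ j, (c j : ℝ) * Real.log (c j)) + m * (1 + Real.log (L+1)) - L := by
    rw [← hsum2]
    exact Finset.sum_le_sum (fun j _ => hcj j)
  linarith

lemma key_lb {a : ℕ × ℕ → ℝ} (ha : ∀ k, 0 < a k) {μ : ℝ × ℝ}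
    (hsum : Summable (zsummand a μ)) {L m : ℕ} {N : ℕ × ℕ} (hL : 0 < L)
    (kv : Fin m → ℕ × ℕ) (hinj : Function.Injective kv)
    (c : Fin m → ℕ) (hc : ∑ j, c j = L) (hN : ∑ j, c j • kv j = N) :
    (L:ℝ) * press a μ - dotNat μ N - Real.log (ZLN a L N)
      ≤ (∑ j, (c j : ℝ) * Real.log (((c j : ℝ)/L) / (zsummand a μ (kv j) / zfun a μ)))
        + m * (1 + Real.log (L+1)) := by
  have hz : 0 < zfun a μ := zfun_pos ha hsum
  have hLpos : (0:ℝ) < (L:ℝ) := by exact_mod_cast hL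
  have hdot : dotNat μ N = ∑ j, (c j : ℝ) * dotNat μ (kv j) := by
    rw [← hN]
    simp only [dotNat, Prod.fst_sum, Prod.snd_sum, Nat.cast_sum, Finset.mul_sum,
      Prod.smul_fst, Prod.smul_snd, smul_eq_mul, Nat.cast_mul]
    rw [← Finset.sum_add_distrib]
    exact Finset.sum_congr rfl (fun j _ => by ring)
  have hLc : (L:ℝ) = ∑ j, (c j : ℝ) := by rw [← Nat.cast_sum, hc]
  have hterm : ∀ j, (c j : ℝ) * Real.log (((c j : ℝ)/L) / (zsummand a μ (kv j) / zfun a μ))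
      = (c j : ℝ) * Real.log (c j) - (c j : ℝ) * Real.log L
        - (c j : ℝ) * Real.log (a (kv j)) - (c j : ℝ) * dotNat μ (kv j)
        + (c j : ℝ) * press a μ := by
    intro j
    rcases Nat.eq_zero_or_pos (c j) with h0 | hpos
    · rw [h0]; simp
    · have hc' : (0:ℝ) < (c j : ℝ) := by exact_mod_cast hpos
      have hnu : zsummand a μ (kv j) / zfun a μ > 0 := by
        exact div_pos (zsummand_pos ha μ _) hz
      rw [Real.log_div (by positivity) (ne_of_gt hnu),
        Real.log_div (ne_of_gt hc') (ne_of_gt hLpos),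
        Real.log_div (ne_of_gt (zsummand_pos ha μ _)) (ne_of_gt hz)]
      rw [show zsummand a μ (kv j) = a (kv j) * Real.exp (dotNat μ (kv j)) from rfl,
        Real.log_mul (ne_of_gt (ha _)) (ne_of_gt (Real.exp_pos _)), Real.log_exp, press]
      ring
  have hlb := log_ZLN_ge ha kv hinj c hc hN
  rw [Finset.sum_congr rfl (fun j _ => hterm j)]
  have e1 : ∑ j, ((c j : ℝ) * Real.log (c j) - (c j : ℝ) * Real.log L
        - (c j : ℝ) * Real.log (a (kv j)) - (c j : ℝ) * dotNat μ (kv j)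
        + (c j : ℝ) * press a μ)
      = (∑ j, (c j : ℝ) * Real.log (c j)) - (L:ℝ) * Real.log L
        - (∑ j, (c j : ℝ) * Real.log (a (kv j))) - dotNat μ N + (L:ℝ) * press a μ := by
    set lL := Real.log (L:ℝ) with hlL
    set pr := press a μ with hpr
    rw [hdot, hLc, Finset.sum_mul, Finset.sum_mul]
    rw [← Finset.sum_sub_distrib, ← Finset.sum_sub_distrib, ← Finset.sum_sub_distrib,
      ← Finset.sum_add_distrib]
  rw [e1]
  linarith

end KeyLB


section Analysis

/-- The linear functional `μ ↦ μ·k`. -/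
def dotCLM (k : ℕ × ℕ) : (ℝ × ℝ) →L[ℝ] ℝ :=
  (k.1 : ℝ) • (ContinuousLinearMap.fst ℝ ℝ ℝ) + (k.2 : ℝ) • (ContinuousLinearMap.snd ℝ ℝ ℝ)

lemma dotCLM_apply (k : ℕ × ℕ) (v : ℝ × ℝ) :
    dotCLM k v = (k.1 : ℝ) * v.1 + (k.2 : ℝ) * v.2 := by
  simp [dotCLM, smul_eq_mul]

lemma hasFDerivAt_dotNat (k : ℕ × ℕ) (μ : ℝ × ℝ) :
    HasFDerivAt (fun μ : ℝ × ℝ => dotNat μ k) (dotCLM k) μ := by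
  have h1 : HasFDerivAt (fun μ : ℝ × ℝ => μ.1 * (k.1:ℝ))
      ((k.1:ℝ) • (ContinuousLinearMap.fst ℝ ℝ ℝ)) μ := (hasFDerivAt_fst).mul_const _
  have h2 : HasFDerivAt (fun μ : ℝ × ℝ => μ.2 * (k.2:ℝ))
      ((k.2:ℝ) • (ContinuousLinearMap.snd ℝ ℝ ℝ)) μ := (hasFDerivAt_snd).mul_const _
  exact (h1.add h2)

lemma hasFDerivAt_zS (a : ℕ × ℕ → ℝ) (S : Finset (ℕ × ℕ)) (μ : ℝ × ℝ) :
    HasFDerivAt (fun μ : ℝ × ℝ => ∑ k ∈ S, zsummand a μ k)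
      (∑ k ∈ S, zsummand a μ k • dotCLM k) μ := by
  apply HasFDerivAt.fun_sum
  intro k _
  have : HasFDerivAt (fun μ : ℝ × ℝ => a k * Real.exp (dotNat μ k))
      (a k • (Real.exp (dotNat μ k) • dotCLM k)) μ := by
    exact ((hasFDerivAt_dotNat k μ).exp).const_mul (a k)
  refine this.congr_fderiv ?_
  rw [zsummand, smul_smul, mul_comm (a k) (Real.exp (dotNat μ k)), ← smul_smul]

lemma continuous_zS (a : ℕ × ℕ → ℝ) (S : Finset (ℕ × ℕ)) :
    Continuous (fun μ : ℝ × ℝ => ∑ k ∈ S, zsummand a μ k) := by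
  apply continuous_finset_sum
  intro k _
  apply Continuous.mul continuous_const
  apply Real.continuous_exp.comp
  exact ((continuous_fst.mul continuous_const).add (continuous_snd.mul continuous_const))

lemma zS_pos {a : ℕ × ℕ → ℝ} (ha : ∀ k, 0 < a k) {S : Finset (ℕ × ℕ)} (hS : S.Nonempty)
    (μ : ℝ × ℝ) : 0 < ∑ k ∈ S, zsummand a μ k :=
  Finset.sum_pos (fun k _ => zsummand_pos ha μ k) hS

/-- First-order condition at a global maximizer of the truncated functional. -/
lemma first_order {a : ℕ × ℕ → ℝ} (ha : ∀ k, 0 < a k) (ρ : ℝ × ℝ)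
    {S : Finset (ℕ × ℕ)} (hS : S.Nonempty) {μS : ℝ × ℝ}
    (hmax : ∀ μ : ℝ × ℝ, dotR ρ μ - Real.log (∑ k ∈ S, zsummand a μ k)
      ≤ dotR ρ μS - Real.log (∑ k ∈ S, zsummand a μS k)) :
    (∑ k ∈ S, (zsummand a μS k / (∑ k' ∈ S, zsummand a μS k')) * (k.1:ℝ)) = ρ.1 ∧
    (∑ k ∈ S, (zsummand a μS k / (∑ k' ∈ S, zsummand a μS k')) * (k.2:ℝ)) = ρ.2 := by
  have hzpos : 0 < ∑ k ∈ S, zsummand a μS k := zS_pos ha hS μS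
  have hdρ : HasFDerivAt (fun μ : ℝ × ℝ => dotR ρ μ)
      (ρ.1 • (ContinuousLinearMap.fst ℝ ℝ ℝ) + ρ.2 • (ContinuousLinearMap.snd ℝ ℝ ℝ)) μS := by
    have h1 : HasFDerivAt (fun μ : ℝ × ℝ => ρ.1 * μ.1)
        (ρ.1 • (ContinuousLinearMap.fst ℝ ℝ ℝ)) μS := (hasFDerivAt_fst).const_mul _
    have h2 : HasFDerivAt (fun μ : ℝ × ℝ => ρ.2 * μ.2)
        (ρ.2 • (ContinuousLinearMap.snd ℝ ℝ ℝ)) μS := (hasFDerivAt_snd).const_mul _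
    exact h1.add h2
  have hdlog : HasFDerivAt (fun μ : ℝ × ℝ => Real.log (∑ k ∈ S, zsummand a μ k))
      ((∑ k ∈ S, zsummand a μS k)⁻¹ • (∑ k ∈ S, zsummand a μS k • dotCLM k)) μS :=
    (hasFDerivAt_zS a S μS).log (ne_of_gt hzpos)
  have hg : HasFDerivAt (fun μ : ℝ × ℝ => dotR ρ μ - Real.log (∑ k ∈ S, zsummand a μ k))
      ((ρ.1 • (ContinuousLinearMap.fst ℝ ℝ ℝ) + ρ.2 • (ContinuousLinearMap.snd ℝ ℝ ℝ))
        - (∑ k ∈ S, zsummand a μS k)⁻¹ • (∑ k ∈ S, zsummand a μS k • dotCLM k)) μS :=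
    hdρ.sub hdlog
  have hloc : IsLocalMax (fun μ : ℝ × ℝ => dotR ρ μ - Real.log (∑ k ∈ S, zsummand a μ k)) μS :=
    Filter.Eventually.of_forall hmax
  have hzero := hloc.hasFDerivAt_eq_zero hg
  constructor
  · have h1 := congrArg (fun (T : (ℝ × ℝ) →L[ℝ] ℝ) => T (1, 0)) hzero
    simp only [ContinuousLinearMap.sub_apply, ContinuousLinearMap.add_apply,
      ContinuousLinearMap.smul_apply, ContinuousLinearMap.coe_fst',
      ContinuousLinearMap.coe_snd', ContinuousLinearMap.zero_apply,
      ContinuousLinearMap.coe_sum', Finset.sum_apply, dotCLM_apply, smul_eq_mul] at h1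
    rw [Finset.sum_congr rfl (fun k (_ : k ∈ S) => by
      rw [show zsummand a μS k / (∑ k' ∈ S, zsummand a μS k') * (k.1:ℝ)
          = (∑ k' ∈ S, zsummand a μS k')⁻¹ * (zsummand a μS k * (k.1:ℝ)) by
        field_simp]), ← Finset.mul_sum]
    have h1' : ρ.1 - (∑ k ∈ S, zsummand a μS k)⁻¹
        * (∑ k ∈ S, zsummand a μS k * ((k.1:ℝ) * 1 + (k.2:ℝ) * 0)) = 0 := by
      convert h1 using 3 <;> simp
    have : ∑ k ∈ S, zsummand a μS k * ((k.1:ℝ) * 1 + (k.2:ℝ) * 0)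
        = ∑ k ∈ S, zsummand a μS k * (k.1:ℝ) := by
      exact Finset.sum_congr rfl (fun k _ => by ring)
    rw [this] at h1'
    linarith
  · have h1 := congrArg (fun (T : (ℝ × ℝ) →L[ℝ] ℝ) => T (0, 1)) hzero
    simp only [ContinuousLinearMap.sub_apply, ContinuousLinearMap.add_apply,
      ContinuousLinearMap.smul_apply, ContinuousLinearMap.coe_fst',
      ContinuousLinearMap.coe_snd', ContinuousLinearMap.zero_apply,
      ContinuousLinearMap.coe_sum', Finset.sum_apply, dotCLM_apply, smul_eq_mul] at h1
    rw [Finset.sum_congr rfl (fun k (_ : k ∈ S) => by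
      rw [show zsummand a μS k / (∑ k' ∈ S, zsummand a μS k') * (k.2:ℝ)
          = (∑ k' ∈ S, zsummand a μS k')⁻¹ * (zsummand a μS k * (k.2:ℝ)) by
        field_simp]), ← Finset.mul_sum]
    have h1' : ρ.2 - (∑ k ∈ S, zsummand a μS k)⁻¹
        * (∑ k ∈ S, zsummand a μS k * ((k.1:ℝ) * 0 + (k.2:ℝ) * 1)) = 0 := by
      convert h1 using 3 <;> simp
    have : ∑ k ∈ S, zsummand a μS k * ((k.1:ℝ) * 0 + (k.2:ℝ) * 1)
        = ∑ k ∈ S, zsummand a μS k * (k.2:ℝ) := by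
      exact Finset.sum_congr rfl (fun k _ => by ring)
    rw [this] at h1'
    linarith

end Analysis


section Coercive

lemma exists_max {a : ℕ × ℕ → ℝ} (ha : ∀ k, 0 < a k) (ρ : ℝ × ℝ)
    (hρ1 : 0 < ρ.1) (hρ2 : 0 < ρ.2) (μb : ℝ × ℝ) (hsum : Summable (zsummand a μb))
    (M : ℕ) (hM : ρ.1 + ρ.2 + 2 ≤ (M:ℝ)) {S : Finset (ℕ × ℕ)}
    (h00 : ((0:ℕ),(0:ℕ)) ∈ S) (hM0 : ((M:ℕ),(0:ℕ)) ∈ S) (h0M : ((0:ℕ),(M:ℕ)) ∈ S) :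
    ∃ μS : ℝ × ℝ,
      (∀ μ : ℝ × ℝ, dotR ρ μ - Real.log (∑ k ∈ S, zsummand a μ k)
          ≤ dotR ρ μS - Real.log (∑ k ∈ S, zsummand a μS k)) ∧
      ‖μS‖ ≤ max ((-(min (Real.log (a (0,0))) (min (Real.log (a (M,0))) (Real.log (a (0,M)))))
          - (dotR ρ μb - press a μb)) / (min (min ρ.1 ρ.2) 1 / 2)) 0 := by
  classical
  set c : ℝ := min (min ρ.1 ρ.2) 1 / 2 with hcdef
  set C0 : ℝ := -(min (Real.log (a (0,0))) (min (Real.log (a (M,0))) (Real.log (a (0,M)))))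
    with hC0def
  set gb : ℝ := dotR ρ μb - press a μb with hgbdef
  set G : (ℝ × ℝ) → ℝ := fun μ => dotR ρ μ - Real.log (∑ k ∈ S, zsummand a μ k) with hGdef
  have hSne : S.Nonempty := ⟨_, h00⟩
  have hc : 0 < c := by
    rw [hcdef]
    have : 0 < min (min ρ.1 ρ.2) 1 := lt_min (lt_min hρ1 hρ2) one_pos
    linarith
  have hcρ1 : c ≤ ρ.1 / 2 := by
    rw [hcdef]
    have : min (min ρ.1 ρ.2) 1 ≤ ρ.1 := le_trans (min_le_left _ _) (min_le_left _ _)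
    linarith
  have hcρ2 : c ≤ ρ.2 / 2 := by
    rw [hcdef]
    have : min (min ρ.1 ρ.2) 1 ≤ ρ.2 := le_trans (min_le_left _ _) (min_le_right _ _)
    linarith
  have hc1 : c ≤ 1 := by
    rw [hcdef]
    have : min (min ρ.1 ρ.2) 1 ≤ 1 := min_le_right _ _
    linarith
  have hMpos : (0:ℝ) < (M:ℝ) := by linarith
  -- coercivity
  have hcoer : ∀ μ : ℝ × ℝ, G μ ≤ C0 - c * ‖μ‖ := by
    intro μ
    set t := ‖μ‖ with htdef
    have ht0 : 0 ≤ t := norm_nonneg μ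
    have habs1 : |μ.1| ≤ t := by
      rw [htdef, ← Real.norm_eq_abs]; exact norm_fst_le μ
    have habs2 : |μ.2| ≤ t := by
      rw [htdef, ← Real.norm_eq_abs]; exact norm_snd_le μ
    set ms : ℝ := max ((M:ℝ) * μ.1) (max ((M:ℝ) * μ.2) 0) with hmsdef
    have hms0 : 0 ≤ ms := le_max_of_le_right (le_max_right _ _)
    have haux : ∀ k ∈ S, Real.log (a k) + dotNat μ k
        ≤ Real.log (∑ k' ∈ S, zsummand a μ k') := by
      intro k hk
      have h1 : zsummand a μ k ≤ ∑ k' ∈ S, zsummand a μ k' :=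
        Finset.single_le_sum (f := fun k' => zsummand a μ k')
          (fun i _ => (zsummand_pos ha μ i).le) hk
      have h2 : Real.log (zsummand a μ k) = Real.log (a k) + dotNat μ k := by
        rw [zsummand, Real.log_mul (ne_of_gt (ha k)) (ne_of_gt (Real.exp_pos _)),
          Real.log_exp]
      rw [← h2]
      exact Real.log_le_log (zsummand_pos ha μ k) h1
    have hdot00 : dotNat μ ((0:ℕ),(0:ℕ)) = 0 := by simp [dotNat]
    have hdotM0 : dotNat μ ((M:ℕ),(0:ℕ)) = (M:ℝ) * μ.1 := by simp [dotNat]; ring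
    have hdot0M : dotNat μ ((0:ℕ),(M:ℕ)) = (M:ℝ) * μ.2 := by simp [dotNat]; ring
    have hC0a : -C0 ≤ Real.log (a (0,0)) := by
      rw [hC0def]; simp
    have hC0b : -C0 ≤ Real.log (a (M,0)) := by
      rw [hC0def]; simp
    have hC0c : -C0 ≤ Real.log (a (0,M)) := by
      rw [hC0def]; simp
    have hp : ms - C0 ≤ Real.log (∑ k' ∈ S, zsummand a μ k') := by
      rw [hmsdef, sub_le_iff_le_add]
      apply max_le
      · have := haux _ hM0
        rw [hdotM0] at this
        linarith
      · apply max_le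
        · have := haux _ h0M
          rw [hdot0M] at this
          linarith
        · have := haux _ h00
          rw [hdot00] at this
          linarith
    have hxineq : dotR ρ μ + c * t ≤ ms := by
      rcases eq_or_lt_of_le ht0 with ht | ht
      · have hμ0 : μ = 0 := by
          rw [htdef] at ht
          exact norm_eq_zero.1 ht.symm
        rw [hμ0]
        simp [dotR]
        rw [← ht]
        simpa using hms0
      · set x1 : ℝ := ρ.1 + c * μ.1 / t with hx1def
        set x2 : ℝ := ρ.2 + c * μ.2 / t with hx2def
        have hd1 : -c ≤ c * μ.1 / t := by
          rw [le_div_iff₀ ht]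
          nlinarith [abs_le.1 habs1]
        have hd1' : c * μ.1 / t ≤ c := by
          rw [div_le_iff₀ ht]
          nlinarith [abs_le.1 habs1]
        have hd2 : -c ≤ c * μ.2 / t := by
          rw [le_div_iff₀ ht]
          nlinarith [abs_le.1 habs2]
        have hd2' : c * μ.2 / t ≤ c := by
          rw [div_le_iff₀ ht]
          nlinarith [abs_le.1 habs2]
        have hx1 : 0 ≤ x1 := by rw [hx1def]; linarith
        have hx2 : 0 ≤ x2 := by rw [hx2def]; linarith
        have hxs : x1 + x2 ≤ (M:ℝ) := by rw [hx1def, hx2def]; linarith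
        have hsq : t^2 ≤ μ.1^2 + μ.2^2 := by
          rcases max_choice ‖μ.1‖ ‖μ.2‖ with h | h <;>
          · rw [htdef, Prod.norm_def, h, Real.norm_eq_abs, sq_abs]
            nlinarith [sq_nonneg μ.1, sq_nonneg μ.2]
        have hlow : dotR ρ μ + c * t ≤ μ.1 * x1 + μ.2 * x2 := by
          rw [hx1def, hx2def, dotR]
          have expand : μ.1 * (ρ.1 + c * μ.1 / t) + μ.2 * (ρ.2 + c * μ.2 / t)
              = ρ.1 * μ.1 + ρ.2 * μ.2 + c * (μ.1^2 + μ.2^2) / t := by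
            field_simp
            ring
          rw [expand]
          have : c * t ≤ c * (μ.1^2 + μ.2^2) / t := by
            rw [le_div_iff₀ ht]
            nlinarith
          linarith
        have hup : μ.1 * x1 + μ.2 * x2 ≤ ms := by
          have e1 : 0 ≤ x1 * (ms - (M:ℝ) * μ.1) :=
            mul_nonneg hx1 (by rw [hmsdef]; simp)
          have e2 : 0 ≤ x2 * (ms - (M:ℝ) * μ.2) := by
            apply mul_nonneg hx2
            have : (M:ℝ) * μ.2 ≤ ms := by
              rw [hmsdef]; exact le_max_of_le_right (le_max_left _ _)
            linarith
          have e3 : 0 ≤ ((M:ℝ) - x1 - x2) * ms := mul_nonneg (by linarith) hms0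
          nlinarith
        linarith
    rw [hGdef]
    simp only
    linarith
  -- the reference value
  have hgb : ∀ μ : ℝ × ℝ, gb ≤ G μb := by
    intro μ
    rw [hgbdef, hGdef]
    simp only
    have h1 : ∑ k ∈ S, zsummand a μb k ≤ zfun a μb :=
      Summable.sum_le_tsum S (fun k _ => (zsummand_pos ha μb k).le) hsum
    have h2 : Real.log (∑ k ∈ S, zsummand a μb k) ≤ Real.log (zfun a μb) :=
      Real.log_le_log (zS_pos ha hSne μb) h1
    rw [press]
    linarith
  set Rb : ℝ := max ((C0 - gb) / c) 0 with hRbdef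
  have hfar : ∀ μ : ℝ × ℝ, Rb < ‖μ‖ → G μ < gb := by
    intro μ hμ
    have h1 : G μ ≤ C0 - c * ‖μ‖ := hcoer μ
    have h2 : (C0 - gb) / c < ‖μ‖ := lt_of_le_of_lt (le_max_left _ _) hμ
    have h3 : C0 - gb < c * ‖μ‖ := by
      rw [div_lt_iff₀ hc] at h2
      linarith
    linarith
  set R : ℝ := Rb + ‖μb‖ + 1 with hRdef
  have hRpos : 0 < R := by
    rw [hRdef, hRbdef]
    have := norm_nonneg μb
    have : (0:ℝ) ≤ max ((C0 - gb) / c) 0 := le_max_right _ _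
    positivity
  have hcont : Continuous G := by
    rw [hGdef]
    apply Continuous.sub
    · exact (continuous_const.mul continuous_fst).add (continuous_const.mul continuous_snd)
    · exact (continuous_zS a S).log (fun μ => (zS_pos ha hSne μ).ne')
  obtain ⟨μS, hμSmem, hμSmax⟩ := (isCompact_closedBall (0:ℝ×ℝ) R).exists_isMaxOn
    ⟨0, Metric.mem_closedBall_self hRpos.le⟩ hcont.continuousOn
  have hball : ∀ μ ∈ Metric.closedBall (0:ℝ×ℝ) R, G μ ≤ G μS := isMaxOn_iff.1 hμSmax
  have hμbball : μb ∈ Metric.closedBall (0:ℝ×ℝ) R := by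
    rw [Metric.mem_closedBall, dist_zero_right, hRdef]
    have : (0:ℝ) ≤ Rb := le_max_right _ _
    linarith
  have hglob : ∀ μ : ℝ × ℝ, G μ ≤ G μS := by
    intro μ
    by_cases hmem : μ ∈ Metric.closedBall (0:ℝ×ℝ) R
    · exact hball μ hmem
    · have hnorm : R < ‖μ‖ := by
        rw [Metric.mem_closedBall, dist_zero_right, not_le] at hmem
        exact hmem
      have h1 : Rb < ‖μ‖ := by
        rw [hRdef] at hnorm
        have := norm_nonneg μb
        linarith
      have h0 := hfar μ h1
      have h2 := hgb μ
      have h3 := hball μb hμbball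
      linarith
  have hnormS : ‖μS‖ ≤ Rb := by
    by_contra hcon
    push_neg at hcon
    have h0 := hfar μS hcon
    have h2 := hgb μS
    have h3 := hglob μb
    linarith
  exact ⟨μS, hglob, hnormS⟩

end Coercive


section GoodQ

lemma exists_good_q {a : ℕ × ℕ → ℝ} (ha : ∀ k, 0 < a k) (ρ : ℝ × ℝ)
    (hρ1 : 0 < ρ.1) (hρ2 : 0 < ρ.2) (μb : ℝ × ℝ)
    (hD1 : Summable (fun k : ℕ × ℕ => (k.1 : ℝ) * zsummand a μb k))
    (hD2 : Summable (fun k : ℕ × ℕ => (k.2 : ℝ) * zsummand a μb k))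
    (hmax : ∀ μ : ℝ × ℝ, Summable (fun k : ℕ × ℕ => (k.1 : ℝ) * zsummand a μ k) →
      Summable (fun k : ℕ × ℕ => (k.2 : ℝ) * zsummand a μ k) →
      dotR ρ μ - press a μ ≤ dotR ρ μb - press a μb)
    (ε : ℝ) (hε : 0 < ε) :
    ∃ (S : Finset (ℕ × ℕ)) (q : ℕ × ℕ → ℝ),
      ((0:ℕ),(0:ℕ)) ∈ S ∧ ((1:ℕ),(0:ℕ)) ∈ S ∧ ((0:ℕ),(1:ℕ)) ∈ S ∧
      (∀ k, 0 < q k) ∧ (∑ k ∈ S, q k = 1) ∧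
      (∑ k ∈ S, q k * (k.1:ℝ)) = ρ.1 ∧ (∑ k ∈ S, q k * (k.2:ℝ)) = ρ.2 ∧
      (∑ k ∈ S, q k * Real.log (q k / (zsummand a μb k / zfun a μb))) ≤ ε := by
  classical
  have hsumb : Summable (zsummand a μb) := summable_zsummand ha hD1 hD2
  have hzb : 0 < zfun a μb := zfun_pos ha hsumb
  set M : ℕ := ⌈ρ.1 + ρ.2 + 2⌉₊ with hMdef
  have hM : ρ.1 + ρ.2 + 2 ≤ (M:ℝ) := Nat.le_ceil _
  have hMpos : (0:ℝ) < (M:ℝ) := by linarith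
  set T : ℕ → Finset (ℕ × ℕ) :=
    fun n => Finset.range (max n M + 1) ×ˢ Finset.range (max n M + 1) with hTdef
  have hmemT : ∀ n : ℕ, ∀ k : ℕ × ℕ, k.1 ≤ max n M → k.2 ≤ max n M → k ∈ T n := by
    intro n k h1 h2
    rw [hTdef]
    rw [Finset.mem_product]
    exact ⟨Finset.mem_range.2 (Nat.lt_succ_of_le h1), Finset.mem_range.2 (Nat.lt_succ_of_le h2)⟩
  have hMge1 : 1 ≤ M := by
    by_contra h
    push_neg at h
    have hM0' : M = 0 := by omega
    rw [hM0'] at hM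
    norm_num at hM
    linarith
  have h00 : ∀ n, ((0:ℕ),(0:ℕ)) ∈ T n := fun n => hmemT n _ (Nat.zero_le _) (Nat.zero_le _)
  have hM0 : ∀ n, ((M:ℕ),(0:ℕ)) ∈ T n := fun n => hmemT n _ (le_max_right _ _) (Nat.zero_le _)
  have h0M : ∀ n, ((0:ℕ),(M:ℕ)) ∈ T n := fun n => hmemT n _ (Nat.zero_le _) (le_max_right _ _)
  have h10 : ∀ n, ((1:ℕ),(0:ℕ)) ∈ T n :=
    fun n => hmemT n _ (le_trans hMge1 (le_max_right _ _)) (Nat.zero_le _)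
  have h01 : ∀ n, ((0:ℕ),(1:ℕ)) ∈ T n :=
    fun n => hmemT n _ (Nat.zero_le _) (le_trans hMge1 (le_max_right _ _))
  have hTne : ∀ n, (T n).Nonempty := fun n => ⟨_, h00 n⟩
  choose μseq hmaxseq hbdseq using fun n : ℕ =>
    exists_max ha ρ hρ1 hρ2 μb hsumb M hM (h00 n) (hM0 n) (h0M n)
  set gb : ℝ := dotR ρ μb - press a μb with hgbdef
  set Rb : ℝ := max ((-(min (Real.log (a (0,0))) (min (Real.log (a (M,0))) (Real.log (a (0,M)))))
      - (dotR ρ μb - press a μb)) / (min (min ρ.1 ρ.2) 1 / 2)) 0 with hRbdef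
  have key : ∃ n : ℕ,
      dotR ρ (μseq n) - Real.log (∑ k ∈ T n, zsummand a (μseq n) k) ≤ gb + ε := by
    by_contra hcon
    push_neg at hcon
    have hball : ∀ n, μseq n ∈ Metric.closedBall (0:ℝ×ℝ) Rb := by
      intro n
      rw [Metric.mem_closedBall, dist_zero_right]
      exact hbdseq n
    obtain ⟨μlim, hμlimmem, φ, hφ, hφtend⟩ :=
      (isCompact_closedBall (0:ℝ×ℝ) Rb).tendsto_subseq hball
    have claimA : ∀ F : Finset (ℕ × ℕ),
        ∑ k ∈ F, zsummand a μlim k ≤ Real.exp (dotR ρ μlim - gb - ε) := by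
      intro F
      set t0 : ℕ := F.sup (fun k => max k.1 k.2) with ht0
      have hFsub : F ⊆ T t0 := by
        intro k hk
        have hle : max k.1 k.2 ≤ t0 := Finset.le_sup (f := fun k : ℕ × ℕ => max k.1 k.2) hk
        exact hmemT t0 k (le_trans (le_trans (le_max_left _ _) hle) (le_max_left _ _))
          (le_trans (le_trans (le_max_right _ _) hle) (le_max_left _ _))
      have hmono : ∀ n, t0 ≤ n → T t0 ⊆ T n := by
        intro n hn
        rw [hTdef]
        apply Finset.product_subset_product <;>
          exact Finset.range_subset_range.2 (by omega)
      have hchain : ∀ n, t0 ≤ n → gb + ε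
          < dotR ρ (μseq n) - Real.log (∑ k ∈ T t0, zsummand a (μseq n) k) := by
        intro n hn
        have h1 := hcon n
        have hz1 : ∑ k ∈ T t0, zsummand a (μseq n) k ≤ ∑ k ∈ T n, zsummand a (μseq n) k :=
          Finset.sum_le_sum_of_subset_of_nonneg (hmono n hn)
            (fun k _ _ => (zsummand_pos ha _ k).le)
        have h2 : Real.log (∑ k ∈ T t0, zsummand a (μseq n) k)
            ≤ Real.log (∑ k ∈ T n, zsummand a (μseq n) k) :=
          Real.log_le_log (zS_pos ha (hTne t0) _) hz1
        linarith
      have hcontt : Continuous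
          (fun v : ℝ × ℝ => dotR ρ v - Real.log (∑ k ∈ T t0, zsummand a v k)) := by
        apply Continuous.sub
        · exact (continuous_const.mul continuous_fst).add (continuous_const.mul continuous_snd)
        · exact (continuous_zS a (T t0)).log (fun μ => (zS_pos ha (hTne t0) μ).ne')
      have htend : Tendsto
          (fun n => dotR ρ (μseq (φ n))
            - Real.log (∑ k ∈ T t0, zsummand a (μseq (φ n)) k)) atTop
          (𝓝 (dotR ρ μlim - Real.log (∑ k ∈ T t0, zsummand a μlim k))) :=
        (hcontt.continuousAt (x := μlim)).tendsto.comp hφtend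
      have hlim : gb + ε ≤ dotR ρ μlim - Real.log (∑ k ∈ T t0, zsummand a μlim k) := by
        apply ge_of_tendsto htend
        filter_upwards [eventually_ge_atTop t0] with n hn
        exact (hchain (φ n) (le_trans hn hφ.le_apply)).le
      have hzpos : 0 < ∑ k ∈ T t0, zsummand a μlim k := zS_pos ha (hTne t0) _
      have hlog : Real.log (∑ k ∈ T t0, zsummand a μlim k) ≤ dotR ρ μlim - gb - ε := by
        linarith
      have hexp := (Real.log_le_iff_le_exp hzpos).1 hlog
      refine le_trans ?_ hexp
      exact Finset.sum_le_sum_of_subset_of_nonneg hFsub (fun k _ _ => (zsummand_pos ha _ k).le)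
    have hsumlim : Summable (zsummand a μlim) :=
      summable_of_sum_le (fun k => (zsummand_pos ha μlim k).le) claimA
    have hzlim : zfun a μlim ≤ Real.exp (dotR ρ μlim - gb - ε) :=
      Summable.tsum_le_of_sum_le hsumlim claimA
    have hpress : press a μlim ≤ dotR ρ μlim - gb - ε := by
      rw [press]
      calc Real.log (zfun a μlim) ≤ Real.log (Real.exp (dotR ρ μlim - gb - ε)) :=
          Real.log_le_log (zfun_pos ha hsumlim) hzlim
        _ = dotR ρ μlim - gb - ε := Real.log_exp _
    -- tilt down
    set s : ℝ := ε / (2 * (ρ.1 + ρ.2)) with hsdef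
    have hs : 0 < s := by
      rw [hsdef]
      positivity
    set μd : ℝ × ℝ := (μlim.1 - s, μlim.2 - s) with hμddef
    have hzz : ∀ k : ℕ × ℕ, zsummand a μd k
        = zsummand a μlim k * Real.exp (-(s * ((k.1:ℝ) + (k.2:ℝ)))) := by
      intro k
      rw [zsummand, zsummand, mul_assoc, ← Real.exp_add]
      congr 2
      rw [hμddef, dotNat, dotNat]
      simp only
      ring
    have hzzle : ∀ k : ℕ × ℕ, zsummand a μd k ≤ zsummand a μlim k := by
      intro k
      rw [hzz k]
      have h1 : Real.exp (-(s * ((k.1:ℝ) + (k.2:ℝ)))) ≤ 1 := by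
        rw [Real.exp_le_one_iff]
        have : (0:ℝ) ≤ (k.1:ℝ) + (k.2:ℝ) := by positivity
        nlinarith
      nlinarith [zsummand_pos ha μlim k, Real.exp_pos (-(s * ((k.1:ℝ) + (k.2:ℝ))))]
    have hkey : ∀ k : ℕ × ℕ, ((k.1:ℝ) + (k.2:ℝ)) * Real.exp (-(s * ((k.1:ℝ) + (k.2:ℝ))))
        ≤ 1/s := by
      intro k
      set u : ℝ := (k.1:ℝ) + (k.2:ℝ) with hudef
      have hu : 0 ≤ u := by positivity
      have h1 : s * u ≤ Real.exp (s * u) := by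
        have := Real.add_one_le_exp (s * u)
        linarith
      rw [le_div_iff₀ hs]
      calc u * Real.exp (-(s*u)) * s = (s * u) * Real.exp (-(s*u)) := by ring
        _ ≤ Real.exp (s*u) * Real.exp (-(s*u)) := by
            apply mul_le_mul_of_nonneg_right h1 (Real.exp_pos _).le
        _ = 1 := by rw [← Real.exp_add]; simp
    have hsum1 : Summable (fun k : ℕ × ℕ => (k.1:ℝ) * zsummand a μd k) := by
      apply Summable.of_nonneg_of_le
        (fun k => mul_nonneg (Nat.cast_nonneg _) (zsummand_pos ha μd k).le)
        (fun k => ?_) (hsumlim.mul_left (1/s))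
      rw [hzz k]
      have h2 : (k.1:ℝ) * Real.exp (-(s * ((k.1:ℝ) + (k.2:ℝ)))) ≤ 1/s := by
        refine le_trans ?_ (hkey k)
        apply mul_le_mul_of_nonneg_right ?_ (Real.exp_pos _).le
        have : (0:ℝ) ≤ (k.2:ℝ) := Nat.cast_nonneg _
        linarith
      calc (k.1:ℝ) * (zsummand a μlim k * Real.exp (-(s * ((k.1:ℝ) + (k.2:ℝ)))))
          = ((k.1:ℝ) * Real.exp (-(s * ((k.1:ℝ) + (k.2:ℝ))))) * zsummand a μlim k := by ring
        _ ≤ (1/s) * zsummand a μlim k :=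
            mul_le_mul_of_nonneg_right h2 (zsummand_pos ha μlim k).le
    have hsum2 : Summable (fun k : ℕ × ℕ => (k.2:ℝ) * zsummand a μd k) := by
      apply Summable.of_nonneg_of_le
        (fun k => mul_nonneg (Nat.cast_nonneg _) (zsummand_pos ha μd k).le)
        (fun k => ?_) (hsumlim.mul_left (1/s))
      rw [hzz k]
      have h2 : (k.2:ℝ) * Real.exp (-(s * ((k.1:ℝ) + (k.2:ℝ)))) ≤ 1/s := by
        refine le_trans ?_ (hkey k)
        apply mul_le_mul_of_nonneg_right ?_ (Real.exp_pos _).le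
        have : (0:ℝ) ≤ (k.1:ℝ) := Nat.cast_nonneg _
        linarith
      calc (k.2:ℝ) * (zsummand a μlim k * Real.exp (-(s * ((k.1:ℝ) + (k.2:ℝ)))))
          = ((k.2:ℝ) * Real.exp (-(s * ((k.1:ℝ) + (k.2:ℝ))))) * zsummand a μlim k := by ring
        _ ≤ (1/s) * zsummand a μlim k :=
            mul_le_mul_of_nonneg_right h2 (zsummand_pos ha μlim k).le
    have hsumd : Summable (zsummand a μd) :=
      Summable.of_nonneg_of_le (fun k => (zsummand_pos ha μd k).le) hzzle hsumlim
    have hpd : press a μd ≤ press a μlim := by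
      rw [press, press]
      apply Real.log_le_log (zfun_pos ha hsumd)
      exact Summable.tsum_le_tsum hzzle hsumd hsumlim
    have hcontra : dotR ρ μd - press a μd ≤ gb := by
      rw [hgbdef]
      exact hmax μd hsum1 hsum2
    have hdotd : dotR ρ μd = dotR ρ μlim - s * (ρ.1 + ρ.2) := by
      rw [hμddef, dotR, dotR]
      simp only
      ring
    have hsval : s * (ρ.1 + ρ.2) = ε / 2 := by
      rw [hsdef]
      field_simp
    rw [hdotd] at hcontra
    have : dotR ρ μlim - s * (ρ.1 + ρ.2) - press a μd ≥ gb + ε / 2 := by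
      rw [hsval]
      linarith
    linarith
  obtain ⟨n, hn⟩ := key
  set S := T n with hSdef
  set zSv : ℝ := ∑ k ∈ S, zsummand a (μseq n) k with hzSvdef
  have hzSpos : 0 < zSv := zS_pos ha (hTne n) _
  set q : ℕ × ℕ → ℝ := fun k => zsummand a (μseq n) k / zSv with hqdef
  have hqpos : ∀ k, 0 < q k := fun k => div_pos (zsummand_pos ha _ k) hzSpos
  have hmean := first_order ha ρ (hTne n) (hmaxseq n)
  refine ⟨S, q, h00 n, h10 n, h01 n, hqpos, ?_, hmean.1, hmean.2, ?_⟩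
  · rw [hqdef]
    simp only
    rw [← Finset.sum_div, ← hzSvdef, div_self (ne_of_gt hzSpos)]
  · -- the KL identity
    have hterm : ∀ k ∈ S, q k * Real.log (q k / (zsummand a μb k / zfun a μb))
        = q k * (dotNat (μseq n) k - Real.log zSv)
          - q k * (dotNat μb k - press a μb) := by
      intro k _
      have h1 : Real.log (q k) = Real.log (a k) + dotNat (μseq n) k - Real.log zSv := by
        rw [hqdef]
        simp only
        rw [Real.log_div (ne_of_gt (zsummand_pos ha _ k)) (ne_of_gt hzSpos), zsummand,
          Real.log_mul (ne_of_gt (ha k)) (ne_of_gt (Real.exp_pos _)), Real.log_exp]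
      have h2 : Real.log (zsummand a μb k / zfun a μb)
          = Real.log (a k) + dotNat μb k - press a μb := by
        rw [Real.log_div (ne_of_gt (zsummand_pos ha _ k)) (ne_of_gt hzb), zsummand,
          Real.log_mul (ne_of_gt (ha k)) (ne_of_gt (Real.exp_pos _)), Real.log_exp, press]
      rw [Real.log_div (ne_of_gt (hqpos k))
        (ne_of_gt (div_pos (zsummand_pos ha _ k) hzb)), h1, h2]
      ring
    rw [Finset.sum_congr rfl hterm, Finset.sum_sub_distrib]
    have hq1 : ∑ k ∈ S, q k = 1 := by
      rw [hqdef]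
      simp only
      rw [← Finset.sum_div, ← hzSvdef, div_self (ne_of_gt hzSpos)]
    have hdotsum : ∀ μ : ℝ × ℝ, ∑ k ∈ S, q k * dotNat μ k
        = μ.1 * (∑ k ∈ S, q k * (k.1:ℝ)) + μ.2 * (∑ k ∈ S, q k * (k.2:ℝ)) := by
      intro μ
      rw [Finset.mul_sum, Finset.mul_sum, ← Finset.sum_add_distrib]
      exact Finset.sum_congr rfl (fun k _ => by rw [dotNat]; ring)
    have e1 : ∑ k ∈ S, q k * (dotNat (μseq n) k - Real.log zSv)
        = dotR ρ (μseq n) - Real.log zSv := by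
      rw [Finset.sum_congr rfl (fun k (_ : k ∈ S) =>
        mul_sub (q k) (dotNat (μseq n) k) (Real.log zSv)),
        Finset.sum_sub_distrib, hdotsum, hmean.1, hmean.2, ← Finset.sum_mul, hq1, dotR]
      ring
    have e2 : ∑ k ∈ S, q k * (dotNat μb k - press a μb)
        = dotR ρ μb - press a μb := by
      rw [Finset.sum_congr rfl (fun k (_ : k ∈ S) =>
        mul_sub (q k) (dotNat μb k) (press a μb)),
        Finset.sum_sub_distrib, hdotsum, hmean.1, hmean.2, ← Finset.sum_mul, hq1, dotR]
      ring
    rw [e1, e2]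
    have hgb' : dotR ρ μb - press a μb = gb := by rw [hgbdef]
    rw [hgb']
    linarith [hn]

end GoodQ


section Rounding

lemma floor_div_tendsto (x : ℝ) (hx : 0 ≤ x) :
    Tendsto (fun L : ℕ => ((⌊x * L⌋₊ : ℝ)/L)) atTop (𝓝 x) := by
  apply tendsto_of_tendsto_of_tendsto_of_le_of_le'
    (g := fun L : ℕ => x - 1/(L:ℝ)) (h := fun _ : ℕ => x)
  · have h1 : Tendsto (fun L : ℕ => 1/(L:ℝ)) atTop (𝓝 0) :=
      tendsto_one_div_atTop_nhds_zero_nat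
    have := tendsto_const_nhds (x := x) (f := atTop (α := ℕ)) |>.sub h1
    simpa using this
  · exact tendsto_const_nhds
  · filter_upwards [eventually_ge_atTop 1] with L hL
    have hL' : (0:ℝ) < (L:ℝ) := by exact_mod_cast hL
    have h2 : x * L < (⌊x * L⌋₊ : ℝ) + 1 := Nat.lt_floor_add_one _
    have h3 : (x - 1/(L:ℝ)) * L ≤ (⌊x * L⌋₊ : ℝ) := by
      have he : (x - 1/(L:ℝ)) * L = x * L - 1 := by field_simp
      rw [he]
      linarith
    calc x - 1/(L:ℝ) = ((x - 1/(L:ℝ)) * L)/L := by field_simp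
      _ ≤ (⌊x * L⌋₊ : ℝ)/L := (div_le_div_iff_of_pos_right hL').2 h3
  · filter_upwards [eventually_ge_atTop 1] with L hL
    have hL' : (0:ℝ) < (L:ℝ) := by exact_mod_cast hL
    rw [div_le_iff₀ hL']
    exact Nat.floor_le (by positivity)

lemma rounding_KL (ρ : ℝ × ℝ) (hρ1 : 0 < ρ.1) (hρ2 : 0 < ρ.2)
    (S : Finset (ℕ × ℕ)) (q ν : ℕ × ℕ → ℝ) (hν : ∀ k, 0 < ν k)
    (h00 : ((0:ℕ),(0:ℕ)) ∈ S) (h10 : ((1:ℕ),(0:ℕ)) ∈ S) (h01 : ((0:ℕ),(1:ℕ)) ∈ S)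
    (hqpos : ∀ k, 0 < q k) (hq1 : ∑ k ∈ S, q k = 1)
    (hm1 : ∑ k ∈ S, q k * (k.1:ℝ) = ρ.1) (hm2 : ∑ k ∈ S, q k * (k.2:ℝ) = ρ.2)
    (NL : ℕ → ℕ × ℕ)
    (hN1 : Tendsto (fun L : ℕ => (((NL L).1 : ℝ)/L)) atTop (𝓝 ρ.1))
    (hN2 : Tendsto (fun L : ℕ => (((NL L).2 : ℝ)/L)) atTop (𝓝 ρ.2))
    (ε : ℝ) (hε : 0 < ε) :
    ∀ᶠ L : ℕ in atTop, ∃ c : ℕ × ℕ → ℕ,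
      (∀ k ∉ S, c k = 0) ∧ (∑ k ∈ S, c k = L) ∧ (∑ k ∈ S, (c k) • k = NL L) ∧
      (∑ k ∈ S, (c k : ℝ) * Real.log (((c k : ℝ)/L) / ν k))
        ≤ L * ((∑ k ∈ S, q k * Real.log (q k / ν k)) + ε) := by
  classical
  -- splitting off the three base points
  set S' : Finset (ℕ × ℕ) := ((S.erase ((0:ℕ),(0:ℕ))).erase ((1:ℕ),(0:ℕ))).erase
    ((0:ℕ),(1:ℕ)) with hS'def
  have hS'sub : S' ⊆ S := by
    intro k hk
    rw [hS'def] at hk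
    exact Finset.mem_of_mem_erase (Finset.mem_of_mem_erase (Finset.mem_of_mem_erase hk))
  have hS'no : ∀ k ∈ S', k ≠ ((0:ℕ),(0:ℕ)) ∧ k ≠ ((1:ℕ),(0:ℕ)) ∧ k ≠ ((0:ℕ),(1:ℕ)) := by
    intro k hk
    rw [hS'def] at hk
    have h3 := Finset.ne_of_mem_erase hk
    have hk2 := Finset.mem_of_mem_erase hk
    have h2 := Finset.ne_of_mem_erase hk2
    have hk1 := Finset.mem_of_mem_erase hk2
    have h1 := Finset.ne_of_mem_erase hk1
    exact ⟨h1, h2, h3⟩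
  have hsplit : ∀ f : ℕ × ℕ → ℝ, ∑ k ∈ S, f k
      = f ((0:ℕ),(0:ℕ)) + f ((1:ℕ),(0:ℕ)) + f ((0:ℕ),(1:ℕ)) + ∑ k ∈ S', f k := by
    intro f
    have e0 : ∑ k ∈ S, f k = f ((0:ℕ),(0:ℕ)) + ∑ k ∈ S.erase ((0:ℕ),(0:ℕ)), f k :=
      (Finset.add_sum_erase S f h00).symm
    have m10 : ((1:ℕ),(0:ℕ)) ∈ S.erase ((0:ℕ),(0:ℕ)) :=
      Finset.mem_erase.2 ⟨by decide, h10⟩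
    have e1 : ∑ k ∈ S.erase ((0:ℕ),(0:ℕ)), f k
        = f ((1:ℕ),(0:ℕ)) + ∑ k ∈ (S.erase ((0:ℕ),(0:ℕ))).erase ((1:ℕ),(0:ℕ)), f k :=
      (Finset.add_sum_erase _ f m10).symm
    have m01 : ((0:ℕ),(1:ℕ)) ∈ (S.erase ((0:ℕ),(0:ℕ))).erase ((1:ℕ),(0:ℕ)) :=
      Finset.mem_erase.2 ⟨by decide, Finset.mem_erase.2 ⟨by decide, h01⟩⟩
    have e2 : ∑ k ∈ (S.erase ((0:ℕ),(0:ℕ))).erase ((1:ℕ),(0:ℕ)), f k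
        = f ((0:ℕ),(1:ℕ)) + ∑ k ∈ S', f k :=
      (Finset.add_sum_erase _ f m01).symm
    rw [e0, e1, e2]
    ring
  have hsplitN : ∀ f : ℕ × ℕ → ℕ, ∑ k ∈ S, f k
      = f ((0:ℕ),(0:ℕ)) + f ((1:ℕ),(0:ℕ)) + f ((0:ℕ),(1:ℕ)) + ∑ k ∈ S', f k := by
    intro f
    have e0 : ∑ k ∈ S, f k = f ((0:ℕ),(0:ℕ)) + ∑ k ∈ S.erase ((0:ℕ),(0:ℕ)), f k :=
      (Finset.add_sum_erase S f h00).symm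
    have m10 : ((1:ℕ),(0:ℕ)) ∈ S.erase ((0:ℕ),(0:ℕ)) :=
      Finset.mem_erase.2 ⟨by decide, h10⟩
    have e1 : ∑ k ∈ S.erase ((0:ℕ),(0:ℕ)), f k
        = f ((1:ℕ),(0:ℕ)) + ∑ k ∈ (S.erase ((0:ℕ),(0:ℕ))).erase ((1:ℕ),(0:ℕ)), f k :=
      (Finset.add_sum_erase _ f m10).symm
    have m01 : ((0:ℕ),(1:ℕ)) ∈ (S.erase ((0:ℕ),(0:ℕ))).erase ((1:ℕ),(0:ℕ)) :=
      Finset.mem_erase.2 ⟨by decide, Finset.mem_erase.2 ⟨by decide, h01⟩⟩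
    have e2 : ∑ k ∈ (S.erase ((0:ℕ),(0:ℕ))).erase ((1:ℕ),(0:ℕ)), f k
        = f ((0:ℕ),(1:ℕ)) + ∑ k ∈ S', f k :=
      (Finset.add_sum_erase _ f m01).symm
    rw [e0, e1, e2]
    omega
  -- sums of q over S'
  set r1 : ℝ := ∑ k ∈ S', q k * (k.1:ℝ) with hr1def
  set r2 : ℝ := ∑ k ∈ S', q k * (k.2:ℝ) with hr2def
  set rs : ℝ := ∑ k ∈ S', q k with hrsdef
  have hr1 : r1 = ρ.1 - q ((1:ℕ),(0:ℕ)) := by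
    have := hsplit (fun k => q k * (k.1:ℝ))
    rw [hm1] at this
    simp only [Nat.cast_zero, Nat.cast_one, mul_zero, mul_one, zero_add] at this
    rw [hr1def]
    linarith
  have hr2 : r2 = ρ.2 - q ((0:ℕ),(1:ℕ)) := by
    have := hsplit (fun k => q k * (k.2:ℝ))
    rw [hm2] at this
    simp only [Nat.cast_zero, Nat.cast_one, mul_zero, mul_one, zero_add] at this
    rw [hr2def]
    linarith
  have hrs : rs = 1 - q ((0:ℕ),(0:ℕ)) - q ((1:ℕ),(0:ℕ)) - q ((0:ℕ),(1:ℕ)) := by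
    have := hsplit q
    rw [hq1] at this
    rw [hrsdef]
    linarith
  set q00 := q ((0:ℕ),(0:ℕ)) with hq00def
  set q10 := q ((1:ℕ),(0:ℕ)) with hq10def
  set q01 := q ((0:ℕ),(1:ℕ)) with hq01def
  have hq00p : 0 < q00 := hqpos _
  have hq10p : 0 < q10 := hqpos _
  have hq01p : 0 < q01 := hqpos _
  -- the construction
  set fc : ℕ → ℕ × ℕ → ℕ := fun L k => ⌊q k * L⌋₊ with hfcdef
  set P1 : ℕ → ℕ := fun L => ∑ k ∈ S', fc L k * k.1 with hP1def
  set P2 : ℕ → ℕ := fun L => ∑ k ∈ S', fc L k * k.2 with hP2def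
  set FS : ℕ → ℕ := fun L => ∑ k ∈ S', fc L k with hFSdef
  set d1 : ℕ → ℕ := fun L => (NL L).1 - P1 L with hd1def
  set d2 : ℕ → ℕ := fun L => (NL L).2 - P2 L with hd2def
  set tot : ℕ → ℕ := fun L => FS L + d1 L + d2 L with htotdef
  set cf : ℕ → ℕ × ℕ → ℕ := fun L k =>
    if k = ((0:ℕ),(0:ℕ)) then L - tot L
    else if k = ((1:ℕ),(0:ℕ)) then d1 L
    else if k = ((0:ℕ),(1:ℕ)) then d2 L
    else if k ∈ S then fc L k else 0 with hcfdef
  have hcf00 : ∀ L, cf L ((0:ℕ),(0:ℕ)) = L - tot L := fun L => by simp [hcfdef]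
  have hcf10 : ∀ L, cf L ((1:ℕ),(0:ℕ)) = d1 L := fun L => by simp [hcfdef]
  have hcf01 : ∀ L, cf L ((0:ℕ),(1:ℕ)) = d2 L := fun L => by simp [hcfdef]
  have hcfS' : ∀ L, ∀ k ∈ S', cf L k = fc L k := by
    intro L k hk
    obtain ⟨hne1, hne2, hne3⟩ := hS'no k hk
    simp only [hcfdef]
    rw [if_neg hne1, if_neg hne2, if_neg hne3, if_pos (hS'sub hk)]
  -- basic floor bounds
  have hfcle : ∀ L : ℕ, ∀ k, (fc L k : ℝ) ≤ q k * L := by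
    intro L k
    rw [hfcdef]
    exact Nat.floor_le (mul_nonneg (hqpos k).le (Nat.cast_nonneg _))
  have hfcge : ∀ L : ℕ, ∀ k, q k * L - 1 ≤ (fc L k : ℝ) := by
    intro L k
    rw [hfcdef]
    have := Nat.lt_floor_add_one (q k * L)
    linarith
  -- limits of the coordinates
  have htendfc : ∀ k, Tendsto (fun L : ℕ => ((fc L k : ℝ)/L)) atTop (𝓝 (q k)) := by
    intro k
    rw [hfcdef]
    exact floor_div_tendsto (q k) (hqpos k).le
  have htendP1 : Tendsto (fun L : ℕ => ((P1 L : ℝ)/L)) atTop (𝓝 r1) := by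
    have : ∀ L : ℕ, ((P1 L : ℝ)/L) = ∑ k ∈ S', ((fc L k : ℝ)/L) * (k.1:ℝ) := by
      intro L
      rw [hP1def]
      push_cast
      rw [Finset.sum_div]
      exact Finset.sum_congr rfl (fun k _ => by ring)
    rw [funext this, hr1def]
    exact tendsto_finset_sum _ (fun k _ => (htendfc k).mul_const _)
  have htendP2 : Tendsto (fun L : ℕ => ((P2 L : ℝ)/L)) atTop (𝓝 r2) := by
    have : ∀ L : ℕ, ((P2 L : ℝ)/L) = ∑ k ∈ S', ((fc L k : ℝ)/L) * (k.2:ℝ) := by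
      intro L
      rw [hP2def]
      push_cast
      rw [Finset.sum_div]
      exact Finset.sum_congr rfl (fun k _ => by ring)
    rw [funext this, hr2def]
    exact tendsto_finset_sum _ (fun k _ => (htendfc k).mul_const _)
  have htendFS : Tendsto (fun L : ℕ => ((FS L : ℝ)/L)) atTop (𝓝 rs) := by
    have : ∀ L : ℕ, ((FS L : ℝ)/L) = ∑ k ∈ S', ((fc L k : ℝ)/L) := by
      intro L
      rw [hFSdef]
      push_cast
      rw [Finset.sum_div]
    rw [funext this, hrsdef]
    exact tendsto_finset_sum _ (fun k _ => htendfc k)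
  -- eventual domination facts
  have hE1 : ∀ᶠ L : ℕ in atTop, P1 L ≤ (NL L).1 ∧ P2 L ≤ (NL L).2 := by
    have hev1 : ∀ᶠ L : ℕ in atTop, ρ.1 - q10/2 < ((NL L).1 : ℝ)/L :=
      hN1.eventually (eventually_gt_nhds (by linarith))
    have hev2 : ∀ᶠ L : ℕ in atTop, ρ.2 - q01/2 < ((NL L).2 : ℝ)/L :=
      hN2.eventually (eventually_gt_nhds (by linarith))
    filter_upwards [hev1, hev2, eventually_ge_atTop 1] with L h1 h2 hL
    have hLpos : (0:ℝ) < (L:ℝ) := by exact_mod_cast hL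
    constructor
    · have hb1 : (P1 L : ℝ) ≤ L * r1 := by
        rw [hP1def]
        push_cast
        rw [hr1def, Finset.mul_sum]
        apply Finset.sum_le_sum
        intro k hk
        have := hfcle L k
        have : (fc L k : ℝ) * (k.1:ℝ) ≤ q k * L * (k.1:ℝ) :=
          mul_le_mul_of_nonneg_right this (Nat.cast_nonneg _)
        linarith [this]
      have hb2 : L * (ρ.1 - q10/2) < ((NL L).1 : ℝ) := by
        have := (lt_div_iff₀ hLpos).1 h1
        linarith [mul_comm (ρ.1 - q10/2) (L:ℝ)]
      have : (P1 L : ℝ) ≤ ((NL L).1 : ℝ) := by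
        rw [hr1] at hb1
        nlinarith
      exact_mod_cast this
    · have hb1 : (P2 L : ℝ) ≤ L * r2 := by
        rw [hP2def]
        push_cast
        rw [hr2def, Finset.mul_sum]
        apply Finset.sum_le_sum
        intro k hk
        have := hfcle L k
        have : (fc L k : ℝ) * (k.2:ℝ) ≤ q k * L * (k.2:ℝ) :=
          mul_le_mul_of_nonneg_right this (Nat.cast_nonneg _)
        linarith [this]
      have hb2 : L * (ρ.2 - q01/2) < ((NL L).2 : ℝ) := by
        have := (lt_div_iff₀ hLpos).1 h2
        linarith [mul_comm (ρ.2 - q01/2) (L:ℝ)]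
      have : (P2 L : ℝ) ≤ ((NL L).2 : ℝ) := by
        rw [hr2] at hb1
        nlinarith
      exact_mod_cast this
  -- limits of d1, d2, c00
  have htendd1 : Tendsto (fun L : ℕ => ((d1 L : ℝ)/L)) atTop (𝓝 q10) := by
    apply Tendsto.congr' ?_ (f₁ := fun L : ℕ => ((NL L).1 : ℝ)/L - (P1 L : ℝ)/L)
    · have := hN1.sub htendP1
      rw [hr1] at this
      simpa using this
    · filter_upwards [hE1] with L hL
      rw [hd1def]
      simp only
      rw [Nat.cast_sub hL.1]
      ring
  have htendd2 : Tendsto (fun L : ℕ => ((d2 L : ℝ)/L)) atTop (𝓝 q01) := by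
    apply Tendsto.congr' ?_ (f₁ := fun L : ℕ => ((NL L).2 : ℝ)/L - (P2 L : ℝ)/L)
    · have := hN2.sub htendP2
      rw [hr2] at this
      simpa using this
    · filter_upwards [hE1] with L hL
      rw [hd2def]
      simp only
      rw [Nat.cast_sub hL.2]
      ring
  have htendtot : Tendsto (fun L : ℕ => ((tot L : ℝ)/L)) atTop (𝓝 (rs + q10 + q01)) := by
    apply Tendsto.congr' ?_
      (f₁ := fun L : ℕ => (FS L : ℝ)/L + (d1 L : ℝ)/L + (d2 L : ℝ)/L)
    · exact (htendFS.add htendd1).add htendd2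
    · filter_upwards with L
      rw [htotdef]
      push_cast
      ring
  have hrsq : rs + q10 + q01 = 1 - q00 := by rw [hrs]; ring
  have hE2 : ∀ᶠ L : ℕ in atTop, tot L ≤ L := by
    have hev : ∀ᶠ L : ℕ in atTop, (tot L : ℝ)/L < 1 - q00/2 := by
      apply htendtot.eventually (eventually_lt_nhds ?_)
      rw [hrsq]
      linarith
    filter_upwards [hev, eventually_ge_atTop 1] with L h1 hL
    have hLpos : (0:ℝ) < (L:ℝ) := by exact_mod_cast hL
    have : (tot L : ℝ) < L := by
      rw [div_lt_iff₀ hLpos] at h1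
      nlinarith
    exact_mod_cast this.le
  have htendc00 : Tendsto (fun L : ℕ => ((L - tot L : ℕ) : ℝ)/L) atTop (𝓝 q00) := by
    apply Tendsto.congr' ?_ (f₁ := fun L : ℕ => 1 - (tot L : ℝ)/L)
    · have h1 := tendsto_const_nhds (x := (1:ℝ)) (f := atTop (α := ℕ)) |>.sub htendtot
      rw [hrsq] at h1
      simpa using h1
    · filter_upwards [hE2, eventually_ge_atTop 1] with L hL hL1
      have hLpos : (0:ℝ) < (L:ℝ) := by exact_mod_cast hL1
      rw [Nat.cast_sub hL]
      field_simp
  -- the KL sum converges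
  set KLq : ℝ := ∑ k ∈ S, q k * Real.log (q k / ν k) with hKLqdef
  have htendc : ∀ k ∈ S, Tendsto (fun L : ℕ => ((cf L k : ℝ)/L)) atTop (𝓝 (q k)) := by
    intro k hk
    by_cases hk0 : k = ((0:ℕ),(0:ℕ))
    · subst hk0
      apply Tendsto.congr' ?_ (f₁ := fun L : ℕ => ((L - tot L : ℕ) : ℝ)/L)
      · exact htendc00
      · filter_upwards with L
        rw [hcf00]
    · by_cases hk1 : k = ((1:ℕ),(0:ℕ))
      · subst hk1
        apply Tendsto.congr' ?_ (f₁ := fun L : ℕ => ((d1 L : ℝ))/L)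
        · exact htendd1
        · filter_upwards with L
          rw [hcf10]
      · by_cases hk2 : k = ((0:ℕ),(1:ℕ))
        · subst hk2
          apply Tendsto.congr' ?_ (f₁ := fun L : ℕ => ((d2 L : ℝ))/L)
          · exact htendd2
          · filter_upwards with L
            rw [hcf01]
        · have hkS' : k ∈ S' := by
            rw [hS'def]
            exact Finset.mem_erase.2 ⟨hk2, Finset.mem_erase.2 ⟨hk1,
              Finset.mem_erase.2 ⟨hk0, hk⟩⟩⟩
          apply Tendsto.congr' ?_ (f₁ := fun L : ℕ => ((fc L k : ℝ))/L)
          · exact htendfc k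
          · filter_upwards with L
            rw [hcfS' L k hkS']
  have htendKL : Tendsto
      (fun L : ℕ => ∑ k ∈ S, ((cf L k : ℝ)/L) * Real.log (((cf L k : ℝ)/L) / ν k))
      atTop (𝓝 KLq) := by
    rw [hKLqdef]
    apply tendsto_finset_sum
    intro k hk
    have hcontk : ContinuousAt (fun x : ℝ => x * Real.log (x / ν k)) (q k) := by
      apply ContinuousAt.mul continuousAt_id
      apply ContinuousAt.comp (Real.continuousAt_log ?_) (continuousAt_id.div_const _)
      · exact div_ne_zero (hqpos k).ne' (hν k).ne'
    exact hcontk.tendsto.comp (htendc k hk)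
  -- conclusion
  have hKLev : ∀ᶠ L : ℕ in atTop,
      ∑ k ∈ S, ((cf L k : ℝ)/L) * Real.log (((cf L k : ℝ)/L) / ν k) ≤ KLq + ε :=
    htendKL.eventually (eventually_le_nhds (by linarith))
  filter_upwards [hE1, hE2, hKLev, eventually_ge_atTop 1] with L hL1 hL2 hL3 hL4
  have hLpos : (0:ℝ) < (L:ℝ) := by exact_mod_cast hL4
  refine ⟨cf L, ?_, ?_, ?_, ?_⟩
  · intro k hk
    rw [hcfdef]
    have hk0 : k ≠ ((0:ℕ),(0:ℕ)) := fun h => hk (h ▸ h00)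
    have hk1 : k ≠ ((1:ℕ),(0:ℕ)) := fun h => hk (h ▸ h10)
    have hk2 : k ≠ ((0:ℕ),(1:ℕ)) := fun h => hk (h ▸ h01)
    simp only [hk0, hk1, hk2, if_false, if_neg]
    rw [if_neg hk]
  · rw [hsplitN (cf L), hcf00, hcf10, hcf01,
      Finset.sum_congr rfl (fun k hk => hcfS' L k hk)]
    have hA : (∑ k ∈ S', fc L k) = FS L := rfl
    have hB : tot L = FS L + d1 L + d2 L := rfl
    rw [hA]
    omega
  · have hfst : (∑ k ∈ S, (cf L k) • k).1 = (NL L).1 := by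
      rw [Prod.fst_sum]
      have : ∀ k ∈ S, ((cf L k) • k).1 = cf L k * k.1 := fun k _ => rfl
      rw [Finset.sum_congr rfl this, hsplitN (fun k => cf L k * k.1)]
      rw [hcf00, hcf10, hcf01,
        Finset.sum_congr rfl (fun k hk => by rw [hcfS' L k hk])]
      simp only [mul_zero, mul_one]
      have hA : (∑ k ∈ S', fc L k * k.1) = P1 L := rfl
      have hB : d1 L = (NL L).1 - P1 L := rfl
      rw [hA]
      have := hL1.1
      omega
    have hsnd : (∑ k ∈ S, (cf L k) • k).2 = (NL L).2 := by
      rw [Prod.snd_sum]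
      have : ∀ k ∈ S, ((cf L k) • k).2 = cf L k * k.2 := fun k _ => rfl
      rw [Finset.sum_congr rfl this, hsplitN (fun k => cf L k * k.2)]
      rw [hcf00, hcf10, hcf01,
        Finset.sum_congr rfl (fun k hk => by rw [hcfS' L k hk])]
      simp only [mul_zero, mul_one]
      have hA : (∑ k ∈ S', fc L k * k.2) = P2 L := rfl
      have hB : d2 L = (NL L).2 - P2 L := rfl
      rw [hA]
      have := hL1.2
      omega
    exact Prod.ext hfst hsnd
  · have he : ∀ k ∈ S, (cf L k : ℝ) * Real.log (((cf L k : ℝ)/L) / ν k)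
        = L * (((cf L k : ℝ)/L) * Real.log (((cf L k : ℝ)/L) / ν k)) := by
      intro k _
      field_simp
    rw [Finset.sum_congr rfl he, ← Finset.mul_sum]
    apply mul_le_mul_of_nonneg_left hL3 hLpos.le

end Rounding

/-- **equivalence of ensembles.** Under the regularity assumptions on `w`,
for `N_L/L → ρ ∈ (0,∞)²` and `μ̄ = M̄(ρ)` the unique maximizer of `μ ↦ ρ·μ - p(μ)` on
`D_μ`, the specific relative entropy `(1/L) H(π_{L,N_L}|ν^L_μ̄)` tends to `0`;
equivalently `-(1/L) log ν^L_μ̄({Σ_L = N_L}) → 0`. -/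
theorem statement12 (w : ℝ × ℝ → ℝ)
    (hpos : ∀ x : ℝ × ℝ, 0 ≤ x.1 → 0 ≤ x.2 → 0 < w x)
    (hC1 : ContDiffOn ℝ 1 w (Ici (0 : ℝ) ×ˢ Ici (0 : ℝ)))
    (hexp : ExpBounded (wN w))
    (hreg : RegularTail w)
    (ρ : ℝ × ℝ) (hρ1 : 0 < ρ.1) (hρ2 : 0 < ρ.2)
    (NL : ℕ → ℕ × ℕ)
    (hNL : Tendsto (fun L : ℕ => ((((NL L).1 : ℝ) / L), (((NL L).2 : ℝ) / L))) atTop (𝓝 ρ))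
    (μb : ℝ × ℝ) (hμbD : μb ∈ Dmu (wN w))
    (hμbMax : ∀ μ ∈ Dmu (wN w),
      dotR ρ μ - press (wN w) μ ≤ dotR ρ μb - press (wN w) μb)
    (hμbUniq : ∀ μ' ∈ Dmu (wN w),
      (∀ μ ∈ Dmu (wN w), dotR ρ μ - press (wN w) μ ≤ dotR ρ μ' - press (wN w) μ') →
      μ' = μb) :
    Tendsto (fun L : ℕ => (1 / (L : ℝ)) * relEnt (wN w) μb L (NL L)) atTop (𝓝 0) ∧
    Tendsto (fun L : ℕ => -(1 / (L : ℝ)) * Real.log (nuProb (wN w) μb L (NL L)))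
      atTop (𝓝 0) := by
  classical
  set a : ℕ × ℕ → ℝ := wN w with hadef
  have ha : ∀ k, 0 < a k := fun k => hpos _ (Nat.cast_nonneg _) (Nat.cast_nonneg _)
  obtain ⟨hD1, hD2⟩ := hμbD
  have hsumb : Summable (zsummand a μb) := summable_zsummand ha hD1 hD2
  have hzb : 0 < zfun a μb := zfun_pos ha hsumb
  have hN1 : Tendsto (fun L : ℕ => (((NL L).1 : ℝ)/L)) atTop (𝓝 ρ.1) :=
    (continuous_fst.tendsto ρ).comp hNL
  have hN2 : Tendsto (fun L : ℕ => (((NL L).2 : ℝ)/L)) atTop (𝓝 ρ.2) :=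
    (continuous_snd.tendsto ρ).comp hNL
  set TL : ℕ → ℝ := fun L => press a μb - dotNat μb (NL L) / L
    - Real.log (ZLN a L (NL L)) / L with hTLdef
  -- nonnegativity
  have hTLnonneg : ∀ L : ℕ, 1 ≤ L → 0 ≤ TL L := by
    intro L hL
    have hLpos : (0:ℝ) < (L:ℝ) := by exact_mod_cast hL
    have hZpos : 0 < ZLN a L (NL L) := ZLN_pos ha (by omega) (NL L)
    have h := ZLN_mul_exp_le (μ := μb) ha hsumb L (NL L)
    have h1 : Real.log (ZLN a L (NL L) * Real.exp (dotNat μb (NL L)))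
        ≤ Real.log ((zfun a μb)^L) :=
      Real.log_le_log (mul_pos hZpos (Real.exp_pos _)) h
    rw [Real.log_mul hZpos.ne' (Real.exp_pos _).ne', Real.log_exp, Real.log_pow] at h1
    rw [hTLdef]
    simp only
    rw [press, sub_sub, sub_nonneg, ← add_div, div_le_iff₀ hLpos]
    linarith [h1]
  -- eventual upper bound
  have hTLub : ∀ ε : ℝ, 0 < ε → ∀ᶠ L : ℕ in atTop, TL L ≤ ε := by
    intro ε hε
    obtain ⟨S, q, h00, h10, h01, hqpos, hq1, hm1, hm2, hKL⟩ :=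
      exists_good_q ha ρ hρ1 hρ2 μb hD1 hD2
        (fun μ h1 h2 => hμbMax μ ⟨h1, h2⟩) (ε/3) (by linarith)
    set ν : ℕ × ℕ → ℝ := fun k => zsummand a μb k / zfun a μb with hνdef
    have hν : ∀ k, 0 < ν k := fun k => div_pos (zsummand_pos ha μb k) hzb
    have hround := rounding_KL ρ hρ1 hρ2 S q ν hν h00 h10 h01 hqpos hq1 hm1 hm2
      NL hN1 hN2 (ε/3) (by linarith)
    -- enumeration of S
    set m : ℕ := S.card with hmdef
    set ef : Fin m ≃ {x // x ∈ S} := S.equivFin.symm with hefdef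
    set kv : Fin m → ℕ × ℕ := fun j => ((ef j : {x // x ∈ S}) : ℕ × ℕ) with hkvdef
    have hkvinj : Function.Injective kv := by
      intro i j h
      exact ef.injective (Subtype.ext h)
    have hsum_eq : ∀ {M : Type} [AddCommMonoid M] (f : ℕ × ℕ → M),
        ∑ j, f (kv j) = ∑ k ∈ S, f k := by
      intro M _ f
      rw [← Finset.sum_coe_sort S f]
      exact Fintype.sum_equiv ef (fun j => f (kv j)) (fun x => f x) (fun j => rfl)
    -- the error term tends to zero
    have hlog0 : Tendsto (fun x : ℝ => Real.log x / x) atTop (𝓝 0) :=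
      Real.isLittleO_log_id_atTop.tendsto_div_nhds_zero
    have hnat : Tendsto (fun L : ℕ => ((L:ℝ)+1)) atTop atTop :=
      tendsto_atTop_add_const_right _ 1 tendsto_natCast_atTop_atTop
    have h1 : Tendsto (fun L : ℕ => Real.log ((L:ℝ)+1) / ((L:ℝ)+1)) atTop (𝓝 0) :=
      hlog0.comp hnat
    have h2 : Tendsto (fun L : ℕ => ((L:ℝ)+1)/(L:ℝ)) atTop (𝓝 1) := by
      apply Tendsto.congr' ?_ (f₁ := fun L : ℕ => 1 + 1/(L:ℝ))
      · have := tendsto_const_nhds (x := (1:ℝ)) (f := atTop (α := ℕ)) |>.add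
          tendsto_one_div_atTop_nhds_zero_nat
        simpa using this
      · filter_upwards [eventually_ge_atTop 1] with L hL
        have hLpos : (0:ℝ) < (L:ℝ) := by exact_mod_cast hL
        field_simp
    have h3 : Tendsto (fun L : ℕ => Real.log ((L:ℝ)+1)/(L:ℝ)) atTop (𝓝 0) := by
      apply Tendsto.congr' ?_
        (f₁ := fun L : ℕ => (Real.log ((L:ℝ)+1) / ((L:ℝ)+1)) * (((L:ℝ)+1)/(L:ℝ)))
      · have := h1.mul h2
        simpa using this
      · filter_upwards [eventually_ge_atTop 1] with L hL
        have hLpos : (0:ℝ) < (L:ℝ) := by exact_mod_cast hL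
        have hL1pos : (0:ℝ) < (L:ℝ)+1 := by linarith
        field_simp
    have hmlogt : Tendsto (fun L : ℕ => (m:ℝ) * (1 + Real.log ((L:ℝ)+1)) / (L:ℝ))
        atTop (𝓝 0) := by
      apply Tendsto.congr' ?_
        (f₁ := fun L : ℕ => (m:ℝ) * (1/(L:ℝ)) + (m:ℝ) * (Real.log ((L:ℝ)+1)/(L:ℝ)))
      · have := (tendsto_const_nhds (x := (m:ℝ)) (f := atTop (α := ℕ)) |>.mul
          tendsto_one_div_atTop_nhds_zero_nat).add
          (tendsto_const_nhds (x := (m:ℝ)) (f := atTop (α := ℕ)) |>.mul h3)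
        simpa using this
      · filter_upwards with L
        field_simp
    have hmlogev : ∀ᶠ L : ℕ in atTop,
        (m:ℝ) * (1 + Real.log ((L:ℝ)+1)) / (L:ℝ) ≤ ε/3 :=
      hmlogt.eventually (eventually_le_nhds (by linarith))
    filter_upwards [hround, hmlogev, eventually_ge_atTop 1] with L hrd hml hL1
    obtain ⟨c, hc0, hcsum, hcN, hcKL⟩ := hrd
    have hLpos : (0:ℝ) < (L:ℝ) := by exact_mod_cast hL1
    have hc : ∑ j, c (kv j) = L := by rw [hsum_eq]; exact hcsum
    have hN : ∑ j, (c (kv j)) • kv j = NL L := by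
      rw [hsum_eq (f := fun k => c k • k)]; exact hcN
    have hkb := key_lb ha hsumb (show 0 < L by omega) kv hkvinj
      (fun j => c (kv j)) hc hN
    have hsumKL : ∑ j, (c (kv j) : ℝ)
          * Real.log (((c (kv j) : ℝ)/L) / (zsummand a μb (kv j) / zfun a μb))
        = ∑ k ∈ S, (c k : ℝ) * Real.log (((c k : ℝ)/L) / ν k) :=
      hsum_eq (f := fun k => (c k : ℝ) * Real.log (((c k : ℝ)/L) / ν k))
    rw [hsumKL] at hkb
    have hKLtot : ∑ k ∈ S, (c k : ℝ) * Real.log (((c k : ℝ)/L) / ν k)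
        ≤ (L:ℝ) * (2*ε/3) := by
      refine le_trans hcKL ?_
      have hKL' : (∑ k ∈ S, q k * Real.log (q k / ν k)) ≤ ε/3 := hKL
      have h2 : (∑ k ∈ S, q k * Real.log (q k / ν k)) + ε/3 ≤ 2*ε/3 := by linarith
      nlinarith
    have hml' : (m:ℝ) * (1 + Real.log ((L:ℝ)+1)) ≤ (ε/3) * L := by
      rw [div_le_iff₀ hLpos] at hml
      linarith
    have hTLform : TL L * L = (L:ℝ) * press a μb - dotNat μb (NL L)
        - Real.log (ZLN a L (NL L)) := by
      rw [hTLdef]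
      simp only
      field_simp
    have hchain : TL L * L ≤ ε * L := by
      rw [hTLform]
      calc (L:ℝ) * press a μb - dotNat μb (NL L) - Real.log (ZLN a L (NL L))
          ≤ (∑ k ∈ S, (c k : ℝ) * Real.log (((c k : ℝ)/L) / ν k))
            + (m:ℝ) * (1 + Real.log ((L:ℝ)+1)) := hkb
        _ ≤ (L:ℝ) * (2*ε/3) + (ε/3) * L := add_le_add hKLtot hml'
        _ = ε * L := by ring
    exact le_of_mul_le_mul_right (by linarith [hchain]) hLpos
  -- the limit
  have hTL0 : Tendsto TL atTop (𝓝 0) := by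
    rw [Metric.tendsto_atTop]
    intro ε hε
    have h1 := hTLub (ε/2) (by linarith)
    rw [eventually_atTop] at h1
    obtain ⟨N1, hN1'⟩ := h1
    refine ⟨max N1 1, fun n hn => ?_⟩
    have hub := hN1' n (le_trans (le_max_left _ _) hn)
    have hlb := hTLnonneg n (le_trans (le_max_right _ _) hn)
    rw [Real.dist_eq, sub_zero, abs_of_nonneg hlb]
    have hhalf : ε/2 < ε := by linarith
    exact lt_of_le_of_lt hub hhalf
  constructor
  · apply Tendsto.congr' ?_ hTL0
    filter_upwards [eventually_ge_atTop 1] with L hL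
    have hLpos : (0:ℝ) < (L:ℝ) := by exact_mod_cast hL
    rw [relEnt_eq ha hsumb (show 0 < L by omega) (NL L), hTLdef]
    simp only
    field_simp
  · apply Tendsto.congr' ?_ hTL0
    filter_upwards [eventually_ge_atTop 1] with L hL
    have hLpos : (0:ℝ) < (L:ℝ) := by exact_mod_cast hL
    have hZpos : 0 < ZLN a L (NL L) := ZLN_pos ha (by omega) (NL L)
    have hnu : nuProb a μb L (NL L)
        = ZLN a L (NL L) * Real.exp (dotNat μb (NL L)) / (zfun a μb)^L :=
      nuProb_eq L (NL L)
    rw [hTLdef]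
    simp only
    rw [hnu, Real.log_div (by positivity) (by positivity),
      Real.log_mul hZpos.ne' (Real.exp_pos _).ne', Real.log_exp, Real.log_pow, press]
    field_simp
    ring
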